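/- arXiv:1511.08163 — 3 statements merged into one kernel-verified Lean document; each statement's English description precedes it below -/
import Mathlib

section
/- Let n ≥ 4 be an integer and let K_{6n} be given a red/blue edge-coloring that is (F_n, K_4)-free. Then the clique number of the subgraph formed by the red edges is exactly 2n. -/
open SimpleGraph

/-- The fan graph `Fₙ`: the join of a single vertex (the center, `none`) with `n`
pairwise disjoint edges (`some (i, a)` is matched with `some (i, !a)`). -/
def Fan (n : ℕ) : SimpleGraph (Option (Fin n × Bool)) where
  Adj u v := u ≠ v ∧ (u = none ∨ v = none ∨ ∃ i a b, u = some (i, a) ∧ v = some (i, b))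
  symm := by
    constructor
    rintro u v ⟨h1, h2⟩
    exact ⟨h1.symm, by tauto⟩
  loopless := by constructor; rintro u ⟨h1, -⟩; exact h1 rfl

/-- `G` contains a subgraph isomorphic to the fan graph `Fₙ`. -/
def ContainsFan {V : Type*} (G : SimpleGraph V) (n : ℕ) : Prop :=
  ∃ f : Option (Fin n × Bool) ↪ V, ∀ u v, (Fan n).Adj u v → G.Adj (f u) (f v)

/-- `G` contains a subgraph isomorphic to `K₄`. -/
def ContainsK4 {V : Type*} (G : SimpleGraph V) : Prop :=
  ∃ a b c d : V, G.Adj a b ∧ G.Adj a c ∧ G.Adj a d ∧ G.Adj b c ∧ G.Adj b d ∧ G.Adj c d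

namespace RedCliqueAux

open Finset

set_option linter.unusedSectionVars false
set_option linter.unusedVariables false

variable {n : ℕ}

/-- A partial matching in the neighborhood of `x`, recorded as a finset of ordered pairs. -/
def IsMatch (R : SimpleGraph (Fin (6 * n))) (x : Fin (6 * n))
    (M : Finset (Fin (6 * n) × Fin (6 * n))) : Prop :=
  (∀ p ∈ M, R.Adj x p.1 ∧ R.Adj x p.2 ∧ R.Adj p.1 p.2) ∧
  ∀ p ∈ M, ∀ q ∈ M, p ≠ q → p.1 ≠ q.1 ∧ p.1 ≠ q.2 ∧ p.2 ≠ q.1 ∧ p.2 ≠ q.2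

instance (R : SimpleGraph (Fin (6 * n))) [DecidableRel R.Adj] (x : Fin (6 * n)) :
    DecidablePred (IsMatch R x) := fun M => by unfold IsMatch; infer_instance

/-- Support of a matching. -/
def msup (M : Finset (Fin (6 * n) × Fin (6 * n))) : Finset (Fin (6 * n)) :=
  M.image Prod.fst ∪ M.image Prod.snd

variable {R : SimpleGraph (Fin (6 * n))} [DecidableRel R.Adj]

lemma mem_msup {M : Finset (Fin (6 * n) × Fin (6 * n))} {z : Fin (6 * n)} :
    z ∈ msup M ↔ ∃ p ∈ M, z = p.1 ∨ z = p.2 := by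
  simp only [msup, mem_union, mem_image]
  constructor
  · rintro (⟨p, hp, rfl⟩ | ⟨p, hp, rfl⟩)
    · exact ⟨p, hp, Or.inl rfl⟩
    · exact ⟨p, hp, Or.inr rfl⟩
  · rintro ⟨p, hp, (rfl | rfl)⟩
    · exact Or.inl ⟨p, hp, rfl⟩
    · exact Or.inr ⟨p, hp, rfl⟩

lemma IsMatch.subset {M M' : Finset (Fin (6 * n) × Fin (6 * n))} {x : Fin (6 * n)}
    (h : IsMatch R x M) (hsub : M' ⊆ M) : IsMatch R x M' :=
  ⟨fun p hp => h.1 p (hsub hp), fun p hp q hq hne => h.2 p (hsub hp) q (hsub hq) hne⟩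

lemma IsMatch.fst_ne_snd {M : Finset (Fin (6 * n) × Fin (6 * n))} {x : Fin (6 * n)}
    (h : IsMatch R x M) {p} (hp : p ∈ M) : p.1 ≠ p.2 :=
  (h.1 p hp).2.2.ne

lemma IsMatch.msup_subset {M : Finset (Fin (6 * n) × Fin (6 * n))} {x : Fin (6 * n)}
    (h : IsMatch R x M) : msup M ⊆ R.neighborFinset x := by
  intro z hz
  rw [mem_msup] at hz
  obtain ⟨p, hp, (rfl | rfl)⟩ := hz
  · exact (R.mem_neighborFinset x p.1).2 (h.1 p hp).1
  · exact (R.mem_neighborFinset x p.2).2 (h.1 p hp).2.1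

lemma IsMatch.not_mem_of_disj {M : Finset (Fin (6 * n) × Fin (6 * n))} {x : Fin (6 * n)}
    (h : IsMatch R x M) {z : Fin (6 * n)} (hz : z ∉ msup M) {q} (hq : q ∈ M) :
    z ≠ q.1 ∧ z ≠ q.2 := by
  constructor <;> rintro rfl <;> exact hz (mem_msup.2 ⟨q, hq, by tauto⟩)

lemma IsMatch.card_msup {M : Finset (Fin (6 * n) × Fin (6 * n))} {x : Fin (6 * n)}
    (h : IsMatch R x M) : (msup M).card = 2 * M.card := by
  have hinj1 : Set.InjOn Prod.fst (M : Set (Fin (6 * n) × Fin (6 * n))) := by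
    intro p hp q hq hpq
    by_contra hne
    exact (h.2 p hp q hq hne).1 hpq
  have hinj2 : Set.InjOn Prod.snd (M : Set (Fin (6 * n) × Fin (6 * n))) := by
    intro p hp q hq hpq
    by_contra hne
    exact (h.2 p hp q hq hne).2.2.2 hpq
  have hdisj : Disjoint (M.image Prod.fst) (M.image Prod.snd) := by
    rw [Finset.disjoint_left]
    rintro z hz1 hz2
    rw [mem_image] at hz1 hz2
    obtain ⟨p, hp, rfl⟩ := hz1
    obtain ⟨q, hq, hq2⟩ := hz2
    by_cases hpq : p = q
    · subst hpq; exact h.fst_ne_snd hp hq2.symm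
    · exact (h.2 p hp q hq hpq).2.1 hq2.symm
  rw [msup, card_union_of_disjoint hdisj, card_image_of_injOn hinj1, card_image_of_injOn hinj2]
  omega

/-- From a matching of size `n` in a neighborhood we get a fan. -/
lemma match_card_lt (hF : ¬ ContainsFan R n) {x : Fin (6 * n)}
    {M : Finset (Fin (6 * n) × Fin (6 * n))} (hM : IsMatch R x M) : M.card < n := by
  by_contra hge
  push_neg at hge
  obtain ⟨M', hsub, hcard⟩ := exists_subset_card_eq hge
  have hM' : IsMatch R x M' := hM.subset hsub
  let e := Finset.equivFinOfCardEq hcard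
  let g : Fin n → Fin (6 * n) × Fin (6 * n) := fun i => (e.symm i : Fin (6 * n) × Fin (6 * n))
  have hgmem : ∀ i, g i ∈ M' := fun i => (e.symm i).2
  have hginj : Function.Injective g := by
    intro i j hij
    exact e.symm.injective (Subtype.ext hij)
  have hadj1 : ∀ i, R.Adj x (g i).1 := fun i => (hM'.1 _ (hgmem i)).1
  have hadj2 : ∀ i, R.Adj x (g i).2 := fun i => (hM'.1 _ (hgmem i)).2.1
  have hadj12 : ∀ i, R.Adj (g i).1 (g i).2 := fun i => (hM'.1 _ (hgmem i)).2.2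
  let f : Option (Fin n × Bool) → Fin (6 * n) := fun o =>
    o.elim x (fun jb => if jb.2 then (g jb.1).2 else (g jb.1).1)
  have hf_none : f none = x := rfl
  have hf_somef : ∀ i, f (some (i, false)) = (g i).1 := fun i => rfl
  have hf_somet : ∀ i, f (some (i, true)) = (g i).2 := fun i => rfl
  apply hF
  refine ⟨⟨f, ?_⟩, ?_⟩
  · rintro (_ | ⟨i, a⟩) (_ | ⟨j, b⟩) hf
    · rfl
    · exfalso
      rcases b with _ | _
      · exact (hadj1 j).ne hf
      · exact (hadj2 j).ne hf
    · exfalso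
      rcases a with _ | _
      · exact (hadj1 i).ne hf.symm
      · exact (hadj2 i).ne hf.symm
    · have hij : i = j := by
        by_contra hijne
        have hgne : g i ≠ g j := fun hh => hijne (hginj hh)
        have h4 := hM'.2 (g i) (hgmem i) (g j) (hgmem j) hgne
        rcases a with _ | _ <;> rcases b with _ | _ <;>
          simp only [hf_somef, hf_somet] at hf
        · exact h4.1 hf
        · exact h4.2.1 hf
        · exact h4.2.2.1 hf
        · exact h4.2.2.2 hf
      subst hij
      have hab : a = b := by
        by_contra habne
        rcases a with _ | _ <;> rcases b with _ | _ <;>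
            simp only [hf_somef, hf_somet] at hf <;> try exact habne rfl
        · exact hM'.fst_ne_snd (hgmem i) hf
        · exact hM'.fst_ne_snd (hgmem i) hf.symm
      subst hab
      rfl
  · rintro u v ⟨hne, hor⟩
    match u, v with
    | none, none => exact absurd rfl hne
    | none, some (j, b) =>
      rcases b with _ | _
      · exact hadj1 j
      · exact hadj2 j
    | some (i, a), none =>
      rcases a with _ | _
      · exact (hadj1 i).symm
      · exact (hadj2 i).symm
    | some (i, a), some (j, b) =>
      have hexi : ∃ i' a' b', (some (i, a) : Option (Fin n × Bool)) = some (i', a') ∧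
          (some (j, b) : Option (Fin n × Bool)) = some (i', b') := by
        rcases hor with h | h | h
        · exact absurd h (by simp)
        · exact absurd h (by simp)
        · exact h
      obtain ⟨i', a', b', hu, hv⟩ := hexi
      simp only [Option.some.injEq, Prod.mk.injEq] at hu hv
      have hji : j = i := hv.1.trans hu.1.symm
      subst hji
      have hab : a ≠ b := fun h => hne (by rw [h])
      rcases a with _ | _ <;> rcases b with _ | _
      · exact absurd rfl hab
      · exact hadj12 j
      · exact (hadj12 j).symm
      · exact absurd rfl hab

lemma no_indep4 (hK : ¬ ContainsK4 Rᶜ) {a b c d : Fin (6 * n)}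
    (hab : a ≠ b) (hac : a ≠ c) (had : a ≠ d) (hbc : b ≠ c) (hbd : b ≠ d) (hcd : c ≠ d)
    (nab : ¬R.Adj a b) (nac : ¬R.Adj a c) (nad : ¬R.Adj a d)
    (nbc : ¬R.Adj b c) (nbd : ¬R.Adj b d) (ncd : ¬R.Adj c d) : False :=
  hK ⟨a, b, c, d, ⟨hab, nab⟩, ⟨hac, nac⟩, ⟨had, nad⟩, ⟨hbc, nbc⟩, ⟨hbd, nbd⟩, ⟨hcd, ncd⟩⟩

lemma indep_card_le_three (hK : ¬ ContainsK4 Rᶜ) {s : Finset (Fin (6 * n))}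
    (hs : ∀ u ∈ s, ∀ v ∈ s, u ≠ v → ¬R.Adj u v) : s.card ≤ 3 := by
  by_contra hlt
  push_neg at hlt
  obtain ⟨t, hts, htc⟩ := exists_subset_card_eq (show 4 ≤ s.card by omega)
  obtain ⟨a, ha⟩ := card_pos.1 (show 0 < t.card by omega)
  have h3 : (t.erase a).card = 3 := by rw [card_erase_of_mem ha, htc]
  obtain ⟨b, c, d, hbc, hbd, hcd, habc⟩ := card_eq_three.1 h3
  have hb : b ∈ t.erase a := by rw [habc]; simp
  have hc : c ∈ t.erase a := by rw [habc]; simp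
  have hd : d ∈ t.erase a := by rw [habc]; simp
  have hab : a ≠ b := (ne_of_mem_erase hb).symm
  have hac : a ≠ c := (ne_of_mem_erase hc).symm
  have had : a ≠ d := (ne_of_mem_erase hd).symm
  have hmem : ∀ z ∈ t.erase a, z ∈ s := fun z hz => hts (mem_of_mem_erase hz)
  exact no_indep4 hK hab hac had hbc hbd hcd
    (hs a (hts ha) b (hmem b hb) hab) (hs a (hts ha) c (hmem c hc) hac)
    (hs a (hts ha) d (hmem d hd) had) (hs b (hmem b hb) c (hmem c hc) hbc)
    (hs b (hmem b hb) d (hmem d hd) hbd) (hs c (hmem c hc) d (hmem d hd) hcd)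

/-- There is a maximum matching in the neighborhood of `x`. -/
lemma exists_max_match (x : Fin (6 * n)) :
    ∃ M, IsMatch R x M ∧ ∀ M', IsMatch R x M' → M'.card ≤ M.card := by
  classical
  set S := ((R.neighborFinset x ×ˢ R.neighborFinset x).powerset).filter (IsMatch R x) with hS
  have hne : S.Nonempty := by
    refine ⟨∅, ?_⟩
    rw [hS, mem_filter, mem_powerset]
    exact ⟨empty_subset _, ⟨fun p hp => absurd hp (notMem_empty p),
      fun p hp => absurd hp (notMem_empty p)⟩⟩
  obtain ⟨M, hMS, hmax⟩ := S.exists_max_image card hne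
  rw [hS, mem_filter] at hMS
  refine ⟨M, hMS.2, fun M' hM' => ?_⟩
  refine hmax M' ?_
  rw [hS, mem_filter, mem_powerset]
  refine ⟨fun p hp => ?_, hM'⟩
  rw [mem_product]
  exact ⟨(R.mem_neighborFinset x p.1).2 (hM'.1 p hp).1,
    (R.mem_neighborFinset x p.2).2 (hM'.1 p hp).2.1⟩

lemma isMatch_insert {x : Fin (6 * n)} {p : Fin (6 * n) × Fin (6 * n)}
    {M : Finset (Fin (6 * n) × Fin (6 * n))} (hM : IsMatch R x M)
    (h1 : R.Adj x p.1) (h2 : R.Adj x p.2) (h12 : R.Adj p.1 p.2)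
    (hdis : ∀ q ∈ M, p.1 ≠ q.1 ∧ p.1 ≠ q.2 ∧ p.2 ≠ q.1 ∧ p.2 ≠ q.2) :
    IsMatch R x (insert p M) ∧ (insert p M).card = M.card + 1 := by
  have hpM : p ∉ M := fun hp => (hdis p hp).1 rfl
  constructor
  · constructor
    · intro q hq
      rcases mem_insert.1 hq with rfl | hq'
      · exact ⟨h1, h2, h12⟩
      · exact hM.1 q hq'
    · intro q hq q' hq' hne
      rcases mem_insert.1 hq with rfl | hq2 <;> rcases mem_insert.1 hq' with rfl | hq2'
      · exact absurd rfl hne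
      · exact hdis q' hq2'
      · obtain ⟨d1, d2, d3, d4⟩ := hdis q hq2
        exact ⟨d1.symm, d3.symm, d2.symm, d4.symm⟩
      · exact hM.2 q hq2 q' hq2' hne
  · rw [card_insert_of_notMem hpM]

/-- Ordered non-adjacent pairs between two vertex sets. -/
def NEP (R : SimpleGraph (Fin (6 * n))) [DecidableRel R.Adj]
    (s t : Finset (Fin (6 * n))) : Finset (Fin (6 * n) × Fin (6 * n)) :=
  (s ×ˢ t).filter (fun p => p.1 ≠ p.2 ∧ ¬ R.Adj p.1 p.2)

lemma mem_NEP {s t : Finset (Fin (6 * n))} {u v : Fin (6 * n)} :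
    (u, v) ∈ NEP R s t ↔ u ∈ s ∧ v ∈ t ∧ u ≠ v ∧ ¬R.Adj u v := by
  simp only [NEP, mem_filter, mem_product]
  tauto

lemma NEP_mono {s s' t t' : Finset (Fin (6 * n))} (hs : s ⊆ s') (ht : t ⊆ t') :
    NEP R s t ⊆ NEP R s' t' := by
  intro p hp
  obtain ⟨u, v⟩ := p
  rw [mem_NEP] at hp ⊢
  exact ⟨hs hp.1, ht hp.2.1, hp.2.2⟩

lemma NEP_card_symm (s t : Finset (Fin (6 * n))) : (NEP R s t).card = (NEP R t s).card := by
  refine card_bij' (fun p _ => (p.2, p.1)) (fun p _ => (p.2, p.1)) ?_ ?_ ?_ ?_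
  · rintro ⟨u, v⟩ hp
    rw [mem_NEP] at hp
    exact mem_NEP.2 ⟨hp.2.1, hp.1, hp.2.2.1.symm, fun h => hp.2.2.2 h.symm⟩
  · rintro ⟨u, v⟩ hp
    rw [mem_NEP] at hp
    exact mem_NEP.2 ⟨hp.2.1, hp.1, hp.2.2.1.symm, fun h => hp.2.2.2 h.symm⟩
  · rintro ⟨u, v⟩ _; rfl
  · rintro ⟨u, v⟩ _; rfl

lemma card_filter_prod (s t : Finset (Fin (6 * n))) (P : Fin (6 * n) → Fin (6 * n) → Prop)
    [∀ a b, Decidable (P a b)] :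
    ((s ×ˢ t).filter (fun p => P p.1 p.2)).card = ∑ a ∈ s, (t.filter (P a)).card := by
  classical
  rw [card_eq_sum_card_fiberwise
    (f := Prod.fst) (t := s) (fun p hp => (mem_product.1 (mem_filter.1 hp).1).1)]
  refine sum_congr rfl fun a ha => ?_
  refine card_bij' (fun p _ => p.2) (fun b _ => (a, b)) ?_ ?_ ?_ ?_
  · rintro ⟨u, v⟩ hp
    rw [mem_filter, mem_filter, mem_product] at hp
    obtain ⟨⟨⟨hu, hv⟩, hP⟩, hfst⟩ := hp
    dsimp only at hfst hP
    subst hfst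
    exact mem_filter.2 ⟨hv, hP⟩
  · intro b hb
    rw [mem_filter] at hb
    rw [mem_filter, mem_filter, mem_product]
    exact ⟨⟨⟨ha, hb.1⟩, hb.2⟩, rfl⟩
  · rintro ⟨u, v⟩ hp
    rw [mem_filter] at hp
    have huv : u = a := hp.2
    subst huv
    rfl
  · intro b _; rfl

lemma NEP_card_biUnion_right {s : Finset (Fin (6 * n))}
    {M : Finset (Fin (6 * n) × Fin (6 * n))} {f : Fin (6 * n) × Fin (6 * n) → Finset (Fin (6 * n))}
    (hdisj : ∀ p ∈ M, ∀ q ∈ M, p ≠ q → Disjoint (f p) (f q)) :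
    (NEP R s (M.biUnion f)).card = ∑ p ∈ M, (NEP R s (f p)).card := by
  classical
  have heq : NEP R s (M.biUnion f) = M.biUnion (fun p => NEP R s (f p)) := by
    ext ⟨u, v⟩
    simp only [mem_NEP, mem_biUnion]
    constructor
    · rintro ⟨hu, ⟨p, hp, hv⟩, h3⟩
      exact ⟨p, hp, hu, hv, h3⟩
    · rintro ⟨p, hp, hu, hv, h3⟩
      exact ⟨hu, ⟨p, hp, hv⟩, h3⟩
  rw [heq]
  apply card_biUnion
  intro p hp q hq hpq
  rw [Function.onFun, Finset.disjoint_left]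
  rintro ⟨u, v⟩ h1 h2
  rw [mem_NEP] at h1 h2
  exact (disjoint_left.1 (hdisj p hp q hq hpq)) h1.2.1 h2.2.1

lemma clique_card_lt (hcl : ¬ ∃ s, R.IsNClique (2 * n) s) {s : Finset (Fin (6 * n))}
    (hs : ∀ a ∈ s, ∀ b ∈ s, a ≠ b → R.Adj a b) : s.card < 2 * n := by
  by_contra hge
  push_neg at hge
  obtain ⟨t, hts, htc⟩ := exists_subset_card_eq hge
  refine hcl ⟨t, ⟨?_, htc⟩⟩
  intro a ha b hb hab
  exact hs a (hts (mem_coe.1 ha)) b (hts (mem_coe.1 hb)) hab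

lemma compl_card (x : Fin (6 * n)) :
    6 * n = 1 + R.degree x + (univ.filter (fun v => v ≠ x ∧ ¬R.Adj x v)).card := by
  classical
  set H := univ.filter (fun v => v ≠ x ∧ ¬R.Adj x v) with hH
  have hsplit : (univ : Finset (Fin (6 * n))) = insert x (R.neighborFinset x ∪ H) := by
    ext v
    simp only [mem_univ, true_iff, mem_insert, mem_union, SimpleGraph.mem_neighborFinset, hH,
      mem_filter, mem_univ, true_and]
    by_cases hvx : v = x
    · exact Or.inl hvx
    · by_cases hadj : R.Adj x v
      · exact Or.inr (Or.inl hadj)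
      · exact Or.inr (Or.inr ⟨hvx, hadj⟩)
  have hx1 : x ∉ R.neighborFinset x ∪ H := by
    simp only [mem_union, SimpleGraph.mem_neighborFinset, hH, mem_filter]
    rintro (h | h)
    · exact R.irrefl h
    · exact h.2.1 rfl
  have hdisj : Disjoint (R.neighborFinset x) H := by
    rw [Finset.disjoint_left]
    intro v hv hv2
    rw [SimpleGraph.mem_neighborFinset] at hv
    rw [hH, mem_filter] at hv2
    exact hv2.2.2 hv
  have := Fintype.card_fin (6 * n)
  calc 6 * n = (univ : Finset (Fin (6 * n))).card := by rw [card_univ, Fintype.card_fin]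
  _ = 1 + (R.degree x + H.card) := by
      rw [hsplit, card_insert_of_notMem hx1, card_union_of_disjoint hdisj,
        R.card_neighborFinset_eq_degree]
      omega
  _ = 1 + R.degree x + H.card := by omega

lemma star_bound (hK : ¬ ContainsK4 Rᶜ) (hcl : ¬ ∃ s, R.IsNClique (2 * n) s)
    {u v : Fin (6 * n)} (hne : u ≠ v) (hnadj : ¬R.Adj u v) :
    (R.neighborFinset u ∩ R.neighborFinset v).card + 4 * n ≤ R.degree u + R.degree v + 1 := by
  classical
  set A := insert u (R.neighborFinset u) with hA
  set B := insert v (R.neighborFinset v) with hB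
  have hKclique : ∀ a ∈ (A ∪ B)ᶜ, ∀ b ∈ (A ∪ B)ᶜ, a ≠ b → R.Adj a b := by
    intro a ha b hb hab
    simp only [mem_compl, mem_union, hA, hB, mem_insert, SimpleGraph.mem_neighborFinset] at ha hb
    push_neg at ha hb
    by_contra hnadj2
    exact no_indep4 hK hne (Ne.symm ha.1.1) (Ne.symm hb.1.1) (Ne.symm ha.2.1) (Ne.symm hb.2.1) hab
      hnadj ha.1.2 hb.1.2 ha.2.2 hb.2.2 hnadj2
  have hKlt : ((A ∪ B)ᶜ).card < 2 * n := clique_card_lt hcl hKclique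
  have h1 : (A ∪ B).card + ((A ∪ B)ᶜ).card = 6 * n := by
    rw [card_add_card_compl, Fintype.card_fin]
  have h2 : (A ∪ B).card + (A ∩ B).card = A.card + B.card := card_union_add_card_inter A B
  have h3 : A.card = R.degree u + 1 := by
    rw [hA, card_insert_of_notMem (R.notMem_neighborFinset_self u),
      R.card_neighborFinset_eq_degree]
  have h4 : B.card = R.degree v + 1 := by
    rw [hB, card_insert_of_notMem (R.notMem_neighborFinset_self v),
      R.card_neighborFinset_eq_degree]
  have h5 : A ∩ B = R.neighborFinset u ∩ R.neighborFinset v := by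
    ext w
    simp only [hA, hB, mem_inter, mem_insert, SimpleGraph.mem_neighborFinset]
    constructor
    · rintro ⟨(rfl | h1'), (rfl | h2')⟩
      · exact absurd rfl hne
      · exact absurd h2' (fun h => hnadj (h.symm))
      · exact absurd h1' (fun h => hnadj h)
      · exact ⟨h1', h2'⟩
    · rintro ⟨h1', h2'⟩
      exact ⟨Or.inr h1', Or.inr h2'⟩
  rw [h5] at h2
  omega

lemma max_match_setup (hF : ¬ ContainsFan R n) (hK : ¬ ContainsK4 Rᶜ) (x : Fin (6 * n)) :
    ∃ M, IsMatch R x M ∧ M.card < n ∧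
      msup M ⊆ R.neighborFinset x ∧
      R.degree x = 2 * M.card + (R.neighborFinset x \ msup M).card ∧
      (R.neighborFinset x \ msup M).card ≤ 3 ∧
      (∀ u ∈ R.neighborFinset x \ msup M, ∀ v ∈ R.neighborFinset x \ msup M,
        u ≠ v → ¬R.Adj u v) := by
  obtain ⟨M, hM, hmax⟩ := exists_max_match (R := R) x
  have hsub := hM.msup_subset
  have hUind : ∀ u ∈ R.neighborFinset x \ msup M, ∀ v ∈ R.neighborFinset x \ msup M,
      u ≠ v → ¬R.Adj u v := by
    intro u hu v hv huv hadj
    rw [mem_sdiff] at hu hv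
    have hdis : ∀ q ∈ M, ((u, v) : Fin (6 * n) × Fin (6 * n)).1 ≠ q.1 ∧ (u, v).1 ≠ q.2 ∧
        (u, v).2 ≠ q.1 ∧ (u, v).2 ≠ q.2 := by
      intro q hq
      obtain ⟨d1, d2⟩ := hM.not_mem_of_disj hu.2 hq
      obtain ⟨d3, d4⟩ := hM.not_mem_of_disj hv.2 hq
      exact ⟨d1, d2, d3, d4⟩
    have hins := isMatch_insert (p := (u, v)) hM ((R.mem_neighborFinset x u).1 hu.1)
      ((R.mem_neighborFinset x v).1 hv.1) hadj hdis
    have := hmax _ hins.1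
    omega
  have hdeg : R.degree x = 2 * M.card + (R.neighborFinset x \ msup M).card := by
    rw [← R.card_neighborFinset_eq_degree, ← hM.card_msup, card_sdiff_of_subset hsub]
    have := card_le_card hsub
    omega
  exact ⟨M, hM, match_card_lt hF hM, hsub, hdeg, indep_card_le_three hK hUind, hUind⟩

lemma match_of_complete (x : Fin (6 * n)) (k : ℕ) :
    ∀ (S : Finset (Fin (6 * n))), S ⊆ R.neighborFinset x →
    (∀ z ∈ S, ∀ w ∈ S, z ≠ w → R.Adj z w) → S.card = 2 * k →
    ∃ M₀, IsMatch R x M₀ ∧ M₀.card = k ∧ msup M₀ ⊆ S := by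
  induction k with
  | zero =>
    intro S _ _ _
    refine ⟨∅, ⟨fun p hp => absurd hp (notMem_empty p),
      fun p hp => absurd hp (notMem_empty p)⟩, card_empty, ?_⟩
    intro z hz
    rw [mem_msup] at hz
    obtain ⟨p, hp, _⟩ := hz
    exact absurd hp (notMem_empty p)
  | succ k ih =>
    intro S hsub hcomp hcard
    obtain ⟨z, hz⟩ := card_pos.1 (by omega : 0 < S.card)
    obtain ⟨w, hw⟩ := card_pos.1
      (by rw [card_erase_of_mem hz]; omega : 0 < (S.erase z).card)
    have hwS : w ∈ S := mem_of_mem_erase hw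
    have hzw : z ≠ w := (ne_of_mem_erase hw).symm
    have hS'sub : (S.erase z).erase w ⊆ S := fun a ha => mem_of_mem_erase (mem_of_mem_erase ha)
    have hS'card : ((S.erase z).erase w).card = 2 * k := by
      rw [card_erase_of_mem hw, card_erase_of_mem hz, hcard]
      omega
    obtain ⟨M₀, hM₀, hM₀c, hM₀s⟩ := ih ((S.erase z).erase w)
      (fun a ha => hsub (hS'sub ha))
      (fun a ha b hb => hcomp a (hS'sub ha) b (hS'sub hb)) hS'card
    have hzn : z ∉ msup M₀ := fun h => by
      have := hM₀s h
      rw [mem_erase, mem_erase] at this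
      exact this.2.1 rfl
    have hwn : w ∉ msup M₀ := fun h => by
      have := hM₀s h
      rw [mem_erase] at this
      exact this.1 rfl
    have hdis : ∀ q ∈ M₀, ((z, w) : Fin (6 * n) × Fin (6 * n)).1 ≠ q.1 ∧ (z, w).1 ≠ q.2 ∧
        (z, w).2 ≠ q.1 ∧ (z, w).2 ≠ q.2 := by
      intro q hq
      obtain ⟨d1, d2⟩ := hM₀.not_mem_of_disj hzn hq
      obtain ⟨d3, d4⟩ := hM₀.not_mem_of_disj hwn hq
      exact ⟨d1, d2, d3, d4⟩
    have hins := isMatch_insert (p := (z, w)) hM₀ ((R.mem_neighborFinset x z).1 (hsub hz))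
      ((R.mem_neighborFinset x w).1 (hsub hwS)) (hcomp z hz w hwS hzw) hdis
    refine ⟨insert (z, w) M₀, hins.1, by rw [hins.2, hM₀c], ?_⟩
    intro a ha
    rw [mem_msup] at ha
    obtain ⟨p, hp, hap⟩ := ha
    rcases mem_insert.1 hp with rfl | hp'
    · rcases hap with rfl | rfl
      · exact hz
      · exact hwS
    · exact hS'sub (hM₀s (mem_msup.2 ⟨p, hp', hap⟩))

lemma endpoint_ne {x : Fin (6 * n)} {M : Finset (Fin (6 * n) × Fin (6 * n))}
    (hM : IsMatch R x M) {p q} (hp : p ∈ M) (hq : q ∈ M) (hpq : p ≠ q)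
    {z w : Fin (6 * n)} (hz : z = p.1 ∨ z = p.2) (hw : w = q.1 ∨ w = q.2) : z ≠ w := by
  obtain ⟨d1, d2, d3, d4⟩ := hM.2 p hp q hq hpq
  rcases hz with rfl | rfl <;> rcases hw with rfl | rfl <;> assumption

lemma endpoint_adj_x {x : Fin (6 * n)} {M : Finset (Fin (6 * n) × Fin (6 * n))}
    (hM : IsMatch R x M) {p} (hp : p ∈ M) {z : Fin (6 * n)}
    (hz : z = p.1 ∨ z = p.2) : R.Adj x z := by
  rcases hz with rfl | rfl
  · exact (hM.1 p hp).1
  · exact (hM.1 p hp).2.1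

lemma endpoint_mem_msup {M : Finset (Fin (6 * n) × Fin (6 * n))} {p} (hp : p ∈ M)
    {z : Fin (6 * n)} (hz : z = p.1 ∨ z = p.2) : z ∈ msup M :=
  mem_msup.2 ⟨p, hp, hz⟩

/-- Augmenting a near-maximum matching with two pendant edges produces a fan. -/
lemma aug1 (hF : ¬ ContainsFan R n) {x : Fin (6 * n)} {M : Finset (Fin (6 * n) × Fin (6 * n))}
    (hM : IsMatch R x M) (hm1 : n ≤ M.card + 1)
    {p} (hp : p ∈ M) {u v : Fin (6 * n)}
    (hu : u ∈ R.neighborFinset x \ msup M) (hv : v ∈ R.neighborFinset x \ msup M)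
    (huv : u ≠ v) (hu1 : R.Adj u p.1) (hv2 : R.Adj v p.2) : False := by
  rw [mem_sdiff] at hu hv
  have hM1 : IsMatch R x (M.erase p) := hM.subset (erase_subset p M)
  have hdis1 : ∀ q ∈ M.erase p, ((v, p.2) : Fin (6 * n) × Fin (6 * n)).1 ≠ q.1 ∧
      (v, p.2).1 ≠ q.2 ∧ (v, p.2).2 ≠ q.1 ∧ (v, p.2).2 ≠ q.2 := by
    intro q hq
    have hqM : q ∈ M := mem_of_mem_erase hq
    have hqp : p ≠ q := fun h => (mem_erase.1 hq).1 h.symm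
    obtain ⟨d1, d2⟩ := hM.not_mem_of_disj hv.2 hqM
    obtain ⟨_, _, d3, d4⟩ := hM.2 p hp q hqM hqp
    exact ⟨d1, d2, d3, d4⟩
  have hins1 := isMatch_insert (p := (v, p.2)) hM1 ((R.mem_neighborFinset x v).1 hv.1) (hM.1 p hp).2.1 hv2 hdis1
  have hdis2 : ∀ q ∈ insert (v, p.2) (M.erase p),
      ((u, p.1) : Fin (6 * n) × Fin (6 * n)).1 ≠ q.1 ∧ (u, p.1).1 ≠ q.2 ∧
      (u, p.1).2 ≠ q.1 ∧ (u, p.1).2 ≠ q.2 := by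
    intro q hq
    rcases mem_insert.1 hq with rfl | hq'
    · refine ⟨huv, ?_, ?_, hM.fst_ne_snd hp⟩
      · exact (hM.not_mem_of_disj hu.2 hp).2
      · intro h
        exact (hM.not_mem_of_disj hv.2 hp).1 h.symm
    · have hqM : q ∈ M := mem_of_mem_erase hq'
      have hqp : p ≠ q := fun h => (mem_erase.1 hq').1 h.symm
      obtain ⟨d1, d2⟩ := hM.not_mem_of_disj hu.2 hqM
      obtain ⟨d3, d4, _, _⟩ := hM.2 p hp q hqM hqp
      exact ⟨d1, d2, d3, d4⟩
  have hins2 := isMatch_insert (p := (u, p.1)) hins1.1 ((R.mem_neighborFinset x u).1 hu.1) (hM.1 p hp).1 hu1 hdis2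
  have hcard : (insert (u, p.1) (insert (v, p.2) (M.erase p))).card = M.card + 1 := by
    rw [hins2.2, hins1.2, card_erase_of_mem hp]
    have : 0 < M.card := card_pos.2 ⟨p, hp⟩
    omega
  have := match_card_lt hF hins2.1
  omega

/-- Replacing two matching edges by three produces a fan. -/
lemma aug2 (hF : ¬ ContainsFan R n) {x : Fin (6 * n)} {M : Finset (Fin (6 * n) × Fin (6 * n))}
    (hM : IsMatch R x M) (hm1 : n ≤ M.card + 1)
    {p q} (hp : p ∈ M) (hq : q ∈ M) (hpq : p ≠ q)
    {u v z z' w w' : Fin (6 * n)}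
    (hu : u ∈ R.neighborFinset x \ msup M) (hv : v ∈ R.neighborFinset x \ msup M)
    (huv : u ≠ v)
    (hz : (z = p.1 ∧ z' = p.2) ∨ (z = p.2 ∧ z' = p.1))
    (hw : (w = q.1 ∧ w' = q.2) ∨ (w = q.2 ∧ w' = q.1))
    (huz' : R.Adj u z') (hzw : R.Adj z w) (hvw' : R.Adj v w') : False := by
  rw [mem_sdiff] at hu hv
  have hze : z = p.1 ∨ z = p.2 := by tauto
  have hz'e : z' = p.1 ∨ z' = p.2 := by tauto
  have hwe : w = q.1 ∨ w = q.2 := by tauto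
  have hw'e : w' = q.1 ∨ w' = q.2 := by tauto
  have hzz' : z ≠ z' := by
    have := hM.fst_ne_snd hp
    rcases hz with ⟨rfl, rfl⟩ | ⟨rfl, rfl⟩
    · exact this
    · exact this.symm
  have hww' : w ≠ w' := by
    have := hM.fst_ne_snd hq
    rcases hw with ⟨rfl, rfl⟩ | ⟨rfl, rfl⟩
    · exact this
    · exact this.symm
  have hqp : q ≠ p := fun h => hpq h.symm
  set M₂ := (M.erase p).erase q with hM₂
  have hM₂sub : M₂ ⊆ M := fun r hr => mem_of_mem_erase (mem_of_mem_erase hr)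
  have hM₂match : IsMatch R x M₂ := hM.subset hM₂sub
  have hrne : ∀ r ∈ M₂, p ≠ r ∧ q ≠ r := by
    intro r hr
    rw [hM₂, mem_erase, mem_erase] at hr
    exact ⟨fun h => hr.2.1 h.symm, fun h => hr.1 h.symm⟩
  -- insert (z, w)
  have hdis0 : ∀ r ∈ M₂, ((z, w) : Fin (6 * n) × Fin (6 * n)).1 ≠ r.1 ∧ (z, w).1 ≠ r.2 ∧
      (z, w).2 ≠ r.1 ∧ (z, w).2 ≠ r.2 := by
    intro r hr
    obtain ⟨hpr, hqr⟩ := hrne r hr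
    exact ⟨endpoint_ne hM hp (hM₂sub hr) hpr hze (Or.inl rfl),
      endpoint_ne hM hp (hM₂sub hr) hpr hze (Or.inr rfl),
      endpoint_ne hM hq (hM₂sub hr) hqr hwe (Or.inl rfl),
      endpoint_ne hM hq (hM₂sub hr) hqr hwe (Or.inr rfl)⟩
  have hins0 := isMatch_insert (p := (z, w)) hM₂match (endpoint_adj_x hM hp hze) (endpoint_adj_x hM hq hwe)
    hzw hdis0
  -- insert (v, w')
  have hdis1 : ∀ r ∈ insert (z, w) M₂, ((v, w') : Fin (6 * n) × Fin (6 * n)).1 ≠ r.1 ∧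
      (v, w').1 ≠ r.2 ∧ (v, w').2 ≠ r.1 ∧ (v, w').2 ≠ r.2 := by
    intro r hr
    rcases mem_insert.1 hr with rfl | hr'
    · refine ⟨?_, ?_, ?_, hww'.symm⟩
      · intro h
        apply hv.2
        rw [show v = z from h]
        exact endpoint_mem_msup hp hze
      · intro h
        apply hv.2
        rw [show v = w from h]
        exact endpoint_mem_msup hq hwe
      · exact endpoint_ne hM hq hp hqp hw'e hze
    · obtain ⟨hpr, hqr⟩ := hrne r hr'
      obtain ⟨d1, d2⟩ := hM.not_mem_of_disj hv.2 (hM₂sub hr')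
      exact ⟨d1, d2, endpoint_ne hM hq (hM₂sub hr') hqr hw'e (Or.inl rfl),
        endpoint_ne hM hq (hM₂sub hr') hqr hw'e (Or.inr rfl)⟩
  have hins1 := isMatch_insert (p := (v, w')) hins0.1 ((R.mem_neighborFinset x v).1 hv.1)
    (endpoint_adj_x hM hq hw'e) hvw' hdis1
  -- insert (u, z')
  have hdis2 : ∀ r ∈ insert (v, w') (insert (z, w) M₂),
      ((u, z') : Fin (6 * n) × Fin (6 * n)).1 ≠ r.1 ∧ (u, z').1 ≠ r.2 ∧
      (u, z').2 ≠ r.1 ∧ (u, z').2 ≠ r.2 := by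
    intro r hr
    rcases mem_insert.1 hr with rfl | hr'
    · refine ⟨huv, ?_, ?_, endpoint_ne hM hp hq hpq hz'e hw'e⟩
      · intro h
        apply hu.2
        rw [show u = w' from h]
        exact endpoint_mem_msup hq hw'e
      · intro h
        apply hv.2
        rw [show v = z' from h.symm]
        exact endpoint_mem_msup hp hz'e
    · rcases mem_insert.1 hr' with rfl | hr''
      · refine ⟨?_, ?_, hzz'.symm, endpoint_ne hM hp hq hpq hz'e hwe⟩
        · intro h
          apply hu.2
          rw [show u = z from h]
          exact endpoint_mem_msup hp hze
        · intro h
          apply hu.2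
          rw [show u = w from h]
          exact endpoint_mem_msup hq hwe
      · obtain ⟨hpr, hqr⟩ := hrne r hr''
        obtain ⟨d1, d2⟩ := hM.not_mem_of_disj hu.2 (hM₂sub hr'')
        exact ⟨d1, d2, endpoint_ne hM hp (hM₂sub hr'') hpr hz'e (Or.inl rfl),
          endpoint_ne hM hp (hM₂sub hr'') hpr hz'e (Or.inr rfl)⟩
  have hins2 := isMatch_insert (p := (u, z')) hins1.1 ((R.mem_neighborFinset x u).1 hu.1)
    (endpoint_adj_x hM hp hz'e) huz' hdis2
  have hqM2 : q ∈ M.erase p := mem_erase.2 ⟨hqp, hq⟩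
  have hcard : (insert (u, z') (insert (v, w') (insert (z, w) M₂))).card = M.card + 1 := by
    rw [hins2.2, hins1.2, hins0.2, hM₂, card_erase_of_mem hqM2, card_erase_of_mem hp]
    have h1 : 0 < M.card := card_pos.2 ⟨p, hp⟩
    have h2 : 0 < (M.erase p).card := card_pos.2 ⟨q, hqM2⟩
    rw [card_erase_of_mem hp] at h2
    omega
  have := match_card_lt hF hins2.1
  omega

/-- Fan from a complete support plus two pendant edges. -/
lemma ffc (hF : ¬ ContainsFan R n) {x : Fin (6 * n)} {M : Finset (Fin (6 * n) × Fin (6 * n))}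
    (hM : IsMatch R x M) (hm1 : M.card + 1 = n)
    (hcomp : ∀ z ∈ msup M, ∀ w ∈ msup M, z ≠ w → R.Adj z w)
    {u v z w : Fin (6 * n)}
    (hu : u ∈ R.neighborFinset x \ msup M) (hv : v ∈ R.neighborFinset x \ msup M)
    (huv : u ≠ v) (hz : z ∈ msup M) (hw : w ∈ msup M) (hzw : z ≠ w)
    (huz : R.Adj u z) (hvw : R.Adj v w) : False := by
  rw [mem_sdiff] at hu hv
  have hmpos : 1 ≤ M.card := by
    by_contra h
    push_neg at h
    interval_cases hMc : M.card
    · rw [card_eq_zero] at hMc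
      subst hMc
      rw [mem_msup] at hz
      obtain ⟨p, hp, _⟩ := hz
      exact absurd hp (notMem_empty p)
  have hmsc : (msup M).card = 2 * M.card := hM.card_msup
  have hS : (((msup M).erase z).erase w).card = 2 * (M.card - 1) := by
    have hwz : w ∈ (msup M).erase z := mem_erase.2 ⟨hzw.symm, hw⟩
    rw [card_erase_of_mem hwz, card_erase_of_mem hz, hmsc]
    omega
  have hSsub : ((msup M).erase z).erase w ⊆ msup M :=
    fun a ha => mem_of_mem_erase (mem_of_mem_erase ha)
  obtain ⟨M₀, hM₀, hM₀c, hM₀s⟩ := match_of_complete x (M.card - 1) (((msup M).erase z).erase w)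
    (fun a ha => hM.msup_subset (hSsub ha))
    (fun a ha b hb => hcomp a (hSsub ha) b (hSsub hb)) hS
  have hsupS : ∀ a, a ∈ msup M₀ → a ∈ msup M ∧ a ≠ z ∧ a ≠ w := by
    intro a ha
    have := hM₀s ha
    rw [mem_erase, mem_erase] at this
    exact ⟨this.2.2, this.2.1, this.1⟩
  have hdis0 : ∀ r ∈ M₀, ((v, w) : Fin (6 * n) × Fin (6 * n)).1 ≠ r.1 ∧ (v, w).1 ≠ r.2 ∧
      (v, w).2 ≠ r.1 ∧ (v, w).2 ≠ r.2 := by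
    intro r hr
    refine ⟨?_, ?_, ?_, ?_⟩
    · intro h
      apply hv.2
      rw [show v = r.1 from h]
      exact (hsupS r.1 (endpoint_mem_msup hr (Or.inl rfl))).1
    · intro h
      apply hv.2
      rw [show v = r.2 from h]
      exact (hsupS r.2 (endpoint_mem_msup hr (Or.inr rfl))).1
    · intro h
      exact (hsupS r.1 (endpoint_mem_msup hr (Or.inl rfl))).2.2 ((show w = r.1 from h)).symm
    · intro h
      exact (hsupS r.2 (endpoint_mem_msup hr (Or.inr rfl))).2.2 ((show w = r.2 from h)).symm
  have hins0 := isMatch_insert (p := (v, w)) hM₀ ((R.mem_neighborFinset x v).1 hv.1)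
    ((R.mem_neighborFinset x w).1 (hM.msup_subset hw)) hvw hdis0
  have hdis1 : ∀ r ∈ insert (v, w) M₀, ((u, z) : Fin (6 * n) × Fin (6 * n)).1 ≠ r.1 ∧
      (u, z).1 ≠ r.2 ∧ (u, z).2 ≠ r.1 ∧ (u, z).2 ≠ r.2 := by
    intro r hr
    rcases mem_insert.1 hr with rfl | hr'
    · refine ⟨huv, ?_, ?_, hzw⟩
      · intro h
        apply hu.2
        rw [show u = w from h]
        exact hw
      · intro h
        apply hv.2
        rw [show v = z from h.symm]
        exact hz
    · refine ⟨?_, ?_, ?_, ?_⟩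
      · intro h
        apply hu.2
        rw [show u = r.1 from h]
        exact (hsupS r.1 (endpoint_mem_msup hr' (Or.inl rfl))).1
      · intro h
        apply hu.2
        rw [show u = r.2 from h]
        exact (hsupS r.2 (endpoint_mem_msup hr' (Or.inr rfl))).1
      · intro h
        exact (hsupS r.1 (endpoint_mem_msup hr' (Or.inl rfl))).2.1 ((show z = r.1 from h)).symm
      · intro h
        exact (hsupS r.2 (endpoint_mem_msup hr' (Or.inr rfl))).2.1 ((show z = r.2 from h)).symm
  have hins1 := isMatch_insert (p := (u, z)) hins0.1 ((R.mem_neighborFinset x u).1 hu.1)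
    ((R.mem_neighborFinset x z).1 (hM.msup_subset hz)) huz hdis1
  have hcard : (insert (u, z) (insert (v, w) M₀)).card = n := by
    rw [hins1.2, hins0.2, hM₀c]
    omega
  have := match_card_lt hF hins1.1
  omega

lemma two_le_card_of_mem {β : Type*} [DecidableEq β] {s : Finset β} {q1 q2 : β}
    (h1 : q1 ∈ s) (h2 : q2 ∈ s) (hne : q1 ≠ q2) : 2 ≤ s.card :=
  one_lt_card.2 ⟨q1, h1, q2, h2, hne⟩

lemma card_four {β : Type*} [DecidableEq β] {p1 p2 p3 p4 : β}
    (h12 : p1 ≠ p2) (h13 : p1 ≠ p3) (h14 : p1 ≠ p4) (h23 : p2 ≠ p3) (h24 : p2 ≠ p4)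
    (h34 : p3 ≠ p4) : ({p1, p2, p3, p4} : Finset β).card = 4 := by
  rw [card_insert_of_notMem (by simp [h12, h13, h14]),
    card_insert_of_notMem (by simp [h23, h24]),
    card_insert_of_notMem (by simp [h34]), card_singleton]

lemma msup_eq_biUnion (M : Finset (Fin (6 * n) × Fin (6 * n))) :
    msup M = M.biUnion (fun p => ({p.1, p.2} : Finset (Fin (6 * n)))) := by
  ext z
  rw [mem_msup]
  simp only [mem_biUnion, mem_insert, mem_singleton]

lemma edge_pair_disjoint {x : Fin (6 * n)} {M : Finset (Fin (6 * n) × Fin (6 * n))}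
    (hM : IsMatch R x M) : ∀ p ∈ M, ∀ q ∈ M, p ≠ q →
    Disjoint ({p.1, p.2} : Finset (Fin (6 * n))) ({q.1, q.2} : Finset (Fin (6 * n))) := by
  intro p hp q hq hpq
  obtain ⟨d1, d2, d3, d4⟩ := hM.2 p hp q hq hpq
  rw [Finset.disjoint_left]
  intro z hz hz'
  rw [mem_insert, mem_singleton] at hz hz'
  rcases hz with rfl | rfl <;> rcases hz' with h | h
  · exact d1 h
  · exact d2 h
  · exact d3 h
  · exact d4 h

lemma NEP_quad (s t w : Finset (Fin (6 * n))) (hst : Disjoint s t) (hs : s ⊆ w) (ht : t ⊆ w) :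
    (NEP R s s).card + (NEP R s t).card + (NEP R t s).card + (NEP R t t).card
      ≤ (NEP R w w).card := by
  have d1 : Disjoint (NEP R s s) (NEP R s t) := by
    rw [Finset.disjoint_left]
    rintro ⟨u, v⟩ h1 h2
    rw [mem_NEP] at h1 h2
    exact (disjoint_left.1 hst) h1.2.1 h2.2.1
  have d2 : Disjoint (NEP R s s ∪ NEP R s t) (NEP R t s) := by
    rw [Finset.disjoint_left]
    rintro ⟨u, v⟩ h1 h2
    rw [mem_NEP] at h2
    rcases mem_union.1 h1 with h | h <;> rw [mem_NEP] at h <;>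
      exact (disjoint_left.1 hst) h.1 h2.1
  have d3 : Disjoint (NEP R s s ∪ NEP R s t ∪ NEP R t s) (NEP R t t) := by
    rw [Finset.disjoint_left]
    rintro ⟨u, v⟩ h1 h2
    rw [mem_NEP] at h2
    rcases mem_union.1 h1 with h | h
    · rcases mem_union.1 h with h' | h' <;> rw [mem_NEP] at h' <;>
        exact (disjoint_left.1 hst) h'.1 h2.1
    · rw [mem_NEP] at h
      exact (disjoint_left.1 hst) h.2.1 h2.2.1
  have hsubU : NEP R s s ∪ NEP R s t ∪ NEP R t s ∪ NEP R t t ⊆ NEP R w w := by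
    intro p hp
    rcases mem_union.1 hp with hp | hp
    · rcases mem_union.1 hp with hp | hp
      · rcases mem_union.1 hp with hp | hp
        · exact NEP_mono hs hs hp
        · exact NEP_mono hs ht hp
      · exact NEP_mono ht hs hp
    · exact NEP_mono ht ht hp
  calc (NEP R s s).card + (NEP R s t).card + (NEP R t s).card + (NEP R t t).card
      = (NEP R s s ∪ NEP R s t ∪ NEP R t s ∪ NEP R t t).card := by
        rw [card_union_of_disjoint d3, card_union_of_disjoint d2, card_union_of_disjoint d1]
    _ ≤ (NEP R w w).card := card_le_card hsubU

lemma NE_b (hn : 4 ≤ n) (hF : ¬ ContainsFan R n) (hK : ¬ ContainsK4 Rᶜ)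
    (hcl : ¬ ∃ s, R.IsNClique (2 * n) s) {x : Fin (6 * n)} (hd : R.degree x = 2 * n) :
    4 * n ≤ (NEP R (R.neighborFinset x) (R.neighborFinset x)).card := by
  obtain ⟨M, hM, hMlt, hsub, hdeg, hU3, hUind⟩ := max_match_setup hF hK x
  set U := R.neighborFinset x \ msup M with hUdef
  have hU2 : U.card = 2 := by omega
  have hm1 : M.card + 1 = n := by omega
  obtain ⟨a, b, hab, hUab⟩ := card_eq_two.1 hU2
  have haU : a ∈ U := by rw [hUab]; exact mem_insert_self a {b}
  have hbU : b ∈ U := by rw [hUab]; simp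
  have hanb : ¬R.Adj a b := hUind a haU b hbU hab
  have haS : a ∉ msup M := (mem_sdiff.1 haU).2
  have hbS : b ∉ msup M := (mem_sdiff.1 hbU).2
  have haN : a ∈ R.neighborFinset x := (mem_sdiff.1 haU).1
  have hbN : b ∈ R.neighborFinset x := (mem_sdiff.1 hbU).1
  have haxadj : R.Adj x a := (R.mem_neighborFinset x a).1 haN
  have hbxadj : R.Adj x b := (R.mem_neighborFinset x b).1 hbN
  have hmsc : (msup M).card = 2 * M.card := hM.card_msup
  have hquad := NEP_quad (R := R) U (msup M) (R.neighborFinset x) sdiff_disjoint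
    sdiff_subset hsub
  have hA1 : 2 ≤ (NEP R U U).card := by
    refine two_le_card_of_mem (mem_NEP.2 ⟨haU, hbU, hab, hanb⟩)
      (mem_NEP.2 ⟨hbU, haU, hab.symm, fun h => hanb h.symm⟩) ?_
    intro h
    rw [Prod.mk.injEq] at h
    exact hab h.1
  -- generic per-edge bound
  have hedge2 : ∀ p ∈ M, 2 ≤ (NEP R U ({p.1, p.2} : Finset (Fin (6 * n)))).card := by
    intro p hp
    have hno1 : ¬(R.Adj a p.1 ∧ R.Adj b p.2) := fun h =>
      aug1 hF hM (by omega) hp haU hbU hab h.1 h.2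
    have hno2 : ¬(R.Adj b p.1 ∧ R.Adj a p.2) := fun h =>
      aug1 hF hM (by omega) hp hbU haU hab.symm h.1 h.2
    have hmemNE : ∀ u z, u ∈ U → (z = p.1 ∨ z = p.2) → ¬R.Adj u z →
        (u, z) ∈ NEP R U ({p.1, p.2} : Finset (Fin (6 * n))) := by
      intro u z hu hz hnadj
      refine mem_NEP.2 ⟨hu, by rcases hz with rfl | rfl <;> simp, ?_, hnadj⟩
      intro h
      subst h
      exact (mem_sdiff.1 hu).2 (endpoint_mem_msup hp hz)
    have h12 := hM.fst_ne_snd hp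
    rcases not_and_or.1 hno1 with h1 | h1 <;> rcases not_and_or.1 hno2 with h2 | h2
    · refine two_le_card_of_mem (hmemNE a p.1 haU (Or.inl rfl) h1)
        (hmemNE b p.1 hbU (Or.inl rfl) h2) ?_
      intro h; rw [Prod.mk.injEq] at h; exact hab h.1
    · refine two_le_card_of_mem (hmemNE a p.1 haU (Or.inl rfl) h1)
        (hmemNE a p.2 haU (Or.inr rfl) h2) ?_
      intro h; rw [Prod.mk.injEq] at h; exact h12 h.2
    · refine two_le_card_of_mem (hmemNE b p.2 hbU (Or.inr rfl) h1)
        (hmemNE b p.1 hbU (Or.inl rfl) h2) ?_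
      intro h; rw [Prod.mk.injEq] at h; exact h12 h.2.symm
    · refine two_le_card_of_mem (hmemNE b p.2 hbU (Or.inr rfl) h1)
        (hmemNE a p.2 haU (Or.inr rfl) h2) ?_
      intro h; rw [Prod.mk.injEq] at h; exact hab h.1.symm
  have hA2gen : 2 * M.card ≤ (NEP R U (msup M)).card := by
    rw [msup_eq_biUnion, NEP_card_biUnion_right (edge_pair_disjoint hM)]
    calc 2 * M.card = ∑ _p ∈ M, 2 := by rw [sum_const, smul_eq_mul, Nat.mul_comm]
      _ ≤ _ := sum_le_sum (fun p hp => hedge2 p hp)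
  by_cases hcomp : ∀ z ∈ msup M, ∀ w ∈ msup M, z ≠ w → R.Adj z w
  · -- support is complete
    by_cases hdouble : ∃ z ∈ msup M, ∃ w ∈ msup M, z ≠ w ∧ R.Adj a z ∧ R.Adj b w
    · exfalso
      obtain ⟨z, hz, w, hw, hzw, haz, hbw⟩ := hdouble
      exact ffc hF hM hm1 hcomp haU hbU hab hz hw hzw haz hbw
    · have hdd : ∀ z ∈ msup M, ∀ w ∈ msup M, z ≠ w → R.Adj a z → ¬R.Adj b w := by
        intro z hz w hw hzw haz hbw
        exact hdouble ⟨z, hz, w, hw, hzw, haz, hbw⟩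
      by_cases hauniv : ∀ z ∈ msup M, R.Adj a z
      · exfalso
        apply hcl
        refine ⟨insert x (insert a (msup M)), ?_, ?_⟩
        · intro α hα β hβ hne
          simp only [coe_insert, Set.mem_insert_iff, mem_coe] at hα hβ
          have hadjmem : ∀ z, z ∈ msup M → R.Adj x z := fun z hz =>
            (R.mem_neighborFinset x z).1 (hsub hz)
          rcases hα with rfl | rfl | hα <;> rcases hβ with rfl | rfl | hβ
          · exact absurd rfl hne
          · exact haxadj
          · exact hadjmem _ hβ
          · exact haxadj.symm
          · exact absurd rfl hne
          · exact hauniv _ hβ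
          · exact (hadjmem _ hα).symm
          · exact (hauniv _ hα).symm
          · exact hcomp _ hα _ hβ hne
        · have hxns : x ∉ insert a (msup M) := by
            rw [mem_insert]
            rintro (rfl | hxs)
            · exact R.irrefl haxadj
            · exact R.irrefl ((R.mem_neighborFinset x x).1 (hsub hxs))
          rw [card_insert_of_notMem hxns, card_insert_of_notMem haS, hmsc]
          omega
      by_cases hbuniv : ∀ z ∈ msup M, R.Adj b z
      · exfalso
        apply hcl
        refine ⟨insert x (insert b (msup M)), ?_, ?_⟩
        · intro α hα β hβ hne
          simp only [coe_insert, Set.mem_insert_iff, mem_coe] at hα hβ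
          have hadjmem : ∀ z, z ∈ msup M → R.Adj x z := fun z hz =>
            (R.mem_neighborFinset x z).1 (hsub hz)
          rcases hα with rfl | rfl | hα <;> rcases hβ with rfl | rfl | hβ
          · exact absurd rfl hne
          · exact hbxadj
          · exact hadjmem _ hβ
          · exact hbxadj.symm
          · exact absurd rfl hne
          · exact hbuniv _ hβ
          · exact (hadjmem _ hα).symm
          · exact (hbuniv _ hα).symm
          · exact hcomp _ hα _ hβ hne
        · have hxns : x ∉ insert b (msup M) := by
            rw [mem_insert]
            rintro (rfl | hxs)
            · exact R.irrefl hbxadj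
            · exact R.irrefl ((R.mem_neighborFinset x x).1 (hsub hxs))
          rw [card_insert_of_notMem hxns, card_insert_of_notMem hbS, hmsc]
          omega
      -- neither a nor b is adjacent to all of the support
      push_neg at hauniv hbuniv
      obtain ⟨za, hza, hnaza⟩ := hauniv
      obtain ⟨zb, hzb, hnbzb⟩ := hbuniv
      have hfibs : (NEP R U (msup M)).card =
          ((msup M).filter (fun z => a ≠ z ∧ ¬R.Adj a z)).card +
          ((msup M).filter (fun z => b ≠ z ∧ ¬R.Adj b z)).card := by
        have hcfp := card_filter_prod U (msup M) (fun u z => u ≠ z ∧ ¬R.Adj u z)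
        rw [NEP, hcfp, hUab, sum_insert (by simp [hab]), sum_singleton]
      have hane : ∀ z ∈ msup M, a ≠ z := fun z hz h => haS (h ▸ hz)
      have hbne : ∀ z ∈ msup M, b ≠ z := fun z hz h => hbS (h ▸ hz)
      have hA2' : 2 * M.card + 1 ≤ (NEP R U (msup M)).card := by
        rw [hfibs]
        by_cases haany : ∃ z ∈ msup M, R.Adj a z
        · obtain ⟨za', hza', haza'⟩ := haany
          have hbfib : (msup M).erase za' ⊆
              (msup M).filter (fun z => b ≠ z ∧ ¬R.Adj b z) := by
            intro w hw
            have hwm := mem_of_mem_erase hw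
            exact mem_filter.2 ⟨hwm, hbne w hwm,
              hdd za' hza' w hwm (ne_of_mem_erase hw).symm haza'⟩
          have hbig : 2 * M.card - 1 ≤ ((msup M).filter (fun z => b ≠ z ∧ ¬R.Adj b z)).card := by
            have := card_le_card hbfib
            rw [card_erase_of_mem hza', hmsc] at this
            omega
          by_cases hbany : ∃ z ∈ msup M, R.Adj b z
          · obtain ⟨zb', hzb', hbzb'⟩ := hbany
            have hafib : (msup M).erase zb' ⊆
                (msup M).filter (fun z => a ≠ z ∧ ¬R.Adj a z) := by
              intro w hw
              have hwm := mem_of_mem_erase hw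
              refine mem_filter.2 ⟨hwm, hane w hwm, ?_⟩
              intro haw
              exact hdd w hwm zb' hzb' (ne_of_mem_erase hw) haw hbzb'
            have hbig2 : 2 * M.card - 1 ≤
                ((msup M).filter (fun z => a ≠ z ∧ ¬R.Adj a z)).card := by
              have := card_le_card hafib
              rw [card_erase_of_mem hzb', hmsc] at this
              omega
            omega
          · have hbfull : msup M ⊆ (msup M).filter (fun z => b ≠ z ∧ ¬R.Adj b z) := by
              intro w hw
              exact mem_filter.2 ⟨hw, hbne w hw, fun h => hbany ⟨w, hw, h⟩⟩
            have h1 : 2 * M.card ≤ ((msup M).filter (fun z => b ≠ z ∧ ¬R.Adj b z)).card := by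
              have := card_le_card hbfull
              omega
            have h2 : 1 ≤ ((msup M).filter (fun z => a ≠ z ∧ ¬R.Adj a z)).card :=
              card_pos.2 ⟨za, mem_filter.2 ⟨hza, hane za hza, hnaza⟩⟩
            omega
        · have hafull : msup M ⊆ (msup M).filter (fun z => a ≠ z ∧ ¬R.Adj a z) := by
            intro w hw
            exact mem_filter.2 ⟨hw, hane w hw, fun h => haany ⟨w, hw, h⟩⟩
          have h1 : 2 * M.card ≤ ((msup M).filter (fun z => a ≠ z ∧ ¬R.Adj a z)).card := by
            have := card_le_card hafull
            omega
          have h2 : 1 ≤ ((msup M).filter (fun z => b ≠ z ∧ ¬R.Adj b z)).card :=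
            card_pos.2 ⟨zb, mem_filter.2 ⟨hzb, hbne zb hzb, hnbzb⟩⟩
          omega
      have hA3' : 2 * M.card + 1 ≤ (NEP R (msup M) U).card := by
        rw [NEP_card_symm]
        exact hA2'
      omega
  · push_neg at hcomp
    obtain ⟨z, hz, w, hw, hzw, hnadj⟩ := hcomp
    have hA4 : 2 ≤ (NEP R (msup M) (msup M)).card := by
      refine two_le_card_of_mem (mem_NEP.2 ⟨hz, hw, hzw, hnadj⟩)
        (mem_NEP.2 ⟨hw, hz, hzw.symm, fun h => hnadj h.symm⟩) ?_
      intro h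
      rw [Prod.mk.injEq] at h
      exact hzw h.1
    have hA3 : 2 * M.card ≤ (NEP R (msup M) U).card := by
      rw [NEP_card_symm]
      exact hA2gen
    omega

lemma two_pos_prod {a b : ℕ} (ha : 1 ≤ a) (hb : 1 ≤ b) : a + b ≤ a * b + 1 := by
  obtain ⟨a', rfl⟩ := Nat.exists_eq_add_of_le ha
  obtain ⟨b', rfl⟩ := Nat.exists_eq_add_of_le hb
  calc (1 + a') + (1 + b') = a' + b' + 2 := by ring
    _ ≤ a' * b' + (a' + b' + 2) := Nat.le_add_left _ _
    _ = (1 + a') * (1 + b') + 1 := by ring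

lemma tri_prod_ineq {p q r m : ℕ} (hsum : p + q + r = m) (hp : p + 1 ≤ m) (hq : q + 1 ≤ m)
    (hr : r + 1 ≤ m) : m ≤ p * q + p * r + q * r + 1 := by
  rcases Nat.eq_zero_or_pos p with rfl | hp0
  · have h := two_pos_prod (a := q) (b := r) (by omega) (by omega)
    calc m = q + r := by omega
      _ ≤ q * r + 1 := h
      _ ≤ 0 * q + 0 * r + q * r + 1 := by simp
  rcases Nat.eq_zero_or_pos q with rfl | hq0
  · have h := two_pos_prod (a := p) (b := r) hp0 (by omega)
    calc m = p + r := by omega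
      _ ≤ p * r + 1 := h
      _ ≤ p * 0 + p * r + 0 * r + 1 := by simp
  · have h := two_pos_prod hp0 hq0
    have h2 : r ≤ p * r := Nat.le_mul_of_pos_left r hp0
    calc m = (p + q) + r := by omega
      _ ≤ (p * q + 1) + p * r := Nat.add_le_add h h2
      _ = p * q + p * r + 1 := by ring
      _ ≤ p * q + p * r + (q * r + 1) := Nat.add_le_add_left (Nat.le_add_left 1 (q * r)) _
      _ = p * q + p * r + q * r + 1 := by ring

lemma msup_mono {M M' : Finset (Fin (6 * n) × Fin (6 * n))} (h : M' ⊆ M) :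
    msup M' ⊆ msup M := by
  intro z hz
  rw [mem_msup] at hz ⊢
  obtain ⟨p, hp, he⟩ := hz
  exact ⟨p, h hp, he⟩

lemma NE_c (hn : 4 ≤ n) (hF : ¬ ContainsFan R n) (hK : ¬ ContainsK4 Rᶜ)
    (hcl : ¬ ∃ s, R.IsNClique (2 * n) s) {x : Fin (6 * n)} (hd : R.degree x = 2 * n + 1) :
    16 * n ≤ (NEP R (R.neighborFinset x) (R.neighborFinset x)).card + 18 := by
  obtain ⟨M, hM, hMlt, hsub, hdeg, hU3, hUind⟩ := max_match_setup hF hK x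
  set U := R.neighborFinset x \ msup M with hUdef
  have hU3' : U.card = 3 := by omega
  have hm1 : M.card + 1 = n := by omega
  obtain ⟨a, b, c, hab, hac, hbc, hUab⟩ := card_eq_three.1 hU3'
  have haU : a ∈ U := by rw [hUab]; simp
  have hbU : b ∈ U := by rw [hUab]; simp
  have hcU : c ∈ U := by rw [hUab]; simp
  have hmsc : (msup M).card = 2 * M.card := hM.card_msup
  have hquad := NEP_quad (R := R) U (msup M) (R.neighborFinset x) sdiff_disjoint
    sdiff_subset hsub
  -- every support vertex is adjacent to a member of U
  have hcov : ∀ z ∈ msup M, R.Adj a z ∨ R.Adj b z ∨ R.Adj c z := by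
    intro z hz
    by_contra hno
    push_neg at hno
    obtain ⟨n1, n2, n3⟩ := hno
    have hzne : ∀ u, u ∈ U → z ≠ u := by
      intro u hu h
      exact (mem_sdiff.1 hu).2 (h ▸ hz)
    exact no_indep4 hK (hzne a haU) (hzne b hbU) (hzne c hcU) hab hac hbc
      (fun h => n1 h.symm) (fun h => n2 h.symm) (fun h => n3 h.symm)
      (hUind a haU b hbU hab) (hUind a haU c hcU hac) (hUind b hbU c hcU hbc)
  -- each edge has a unique owner in U adjacent to both of its endpoints
  have hown : ∀ p ∈ M, ∃ u ∈ U, R.Adj u p.1 ∧ R.Adj u p.2 ∧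
      ∀ v ∈ U, v ≠ u → ¬R.Adj v p.1 ∧ ¬R.Adj v p.2 := by
    intro p hp
    have h1 := hcov p.1 (endpoint_mem_msup hp (Or.inl rfl))
    have h2 := hcov p.2 (endpoint_mem_msup hp (Or.inr rfl))
    have hexu1 : ∃ u1 ∈ U, R.Adj u1 p.1 := by
      rcases h1 with h | h | h
      exacts [⟨a, haU, h⟩, ⟨b, hbU, h⟩, ⟨c, hcU, h⟩]
    have hexu2 : ∃ u2 ∈ U, R.Adj u2 p.2 := by
      rcases h2 with h | h | h
      exacts [⟨a, haU, h⟩, ⟨b, hbU, h⟩, ⟨c, hcU, h⟩]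
    obtain ⟨u1, hu1U, hu1⟩ := hexu1
    obtain ⟨u2, hu2U, hu2⟩ := hexu2
    have hu12 : u1 = u2 := by
      by_contra hne
      exact aug1 hF hM (by omega) hp hu1U hu2U hne hu1 hu2
    subst hu12
    refine ⟨u1, hu1U, hu1, hu2, ?_⟩
    intro v hv hvne
    constructor
    · intro hv1
      exact aug1 hF hM (by omega) hp hv hu1U hvne hv1 hu2
    · intro hv2'
      exact aug1 hF hM (by omega) hp hu1U hv hvne.symm hu1 hv2'
  -- owner function
  set ow : Fin (6 * n) × Fin (6 * n) → Fin (6 * n) :=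
    fun p => if R.Adj a p.1 then a else if R.Adj b p.1 then b else c with how
  have howner : ∀ p ∈ M, ow p ∈ U ∧ R.Adj (ow p) p.1 ∧ R.Adj (ow p) p.2 ∧
      ∀ v ∈ U, v ≠ ow p → ¬R.Adj v p.1 ∧ ¬R.Adj v p.2 := by
    intro p hp
    obtain ⟨u, huU, hup1, hup2, huniq⟩ := hown p hp
    have hueq : ow p = u := by
      have huU' := huU
      rw [hUab, mem_insert, mem_insert, mem_singleton] at huU'
      rcases huU' with rfl | rfl | rfl
      · rw [how]
        simp [hup1]
      · have hna : ¬R.Adj a p.1 := (huniq a haU hab).1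
        rw [how]
        simp [hna, hup1]
      · have hna : ¬R.Adj a p.1 := (huniq a haU hac).1
        have hnb : ¬R.Adj b p.1 := (huniq b hbU hbc).1
        rw [how]
        simp [hna, hnb]
    rw [hueq]
    exact ⟨huU, hup1, hup2, huniq⟩
  have hMab : ∀ p ∈ M, ow p = a ∨ ow p = b ∨ ow p = c := by
    intro p hp
    have h := (howner p hp).1
    rw [hUab, mem_insert, mem_insert, mem_singleton] at h
    exact h
  set Ma := M.filter (fun p => ow p = a) with hMa
  set Mb := M.filter (fun p => ow p = b) with hMb
  set Mc := M.filter (fun p => ow p = c) with hMcdef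
  have hun : Ma ∪ Mb ∪ Mc = M := by
    ext p
    simp only [hMa, hMb, hMcdef, mem_union, mem_filter]
    constructor
    · rintro ((⟨h, _⟩ | ⟨h, _⟩) | ⟨h, _⟩) <;> exact h
    · intro hp
      rcases hMab p hp with h | h | h <;> tauto
  have d1 : Disjoint Ma Mb := by
    rw [Finset.disjoint_left]
    intro p h1 h2
    rw [hMa, mem_filter] at h1
    rw [hMb, mem_filter] at h2
    exact hab (h1.2.symm.trans h2.2)
  have d2 : Disjoint (Ma ∪ Mb) Mc := by
    rw [Finset.disjoint_left]
    intro p h1 h2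
    rw [hMcdef, mem_filter] at h2
    rcases mem_union.1 h1 with h | h
    · rw [hMa, mem_filter] at h
      exact hac (h.2.symm.trans h2.2)
    · rw [hMb, mem_filter] at h
      exact hbc (h.2.symm.trans h2.2)
  have hpart : Ma.card + Mb.card + Mc.card = M.card := by
    rw [← hun, card_union_of_disjoint d2, card_union_of_disjoint d1]
  -- endpoints of differently-owned edges are non-adjacent
  have hcross : ∀ p ∈ M, ∀ q ∈ M, ow p ≠ ow q →
      ∀ z, (z = p.1 ∨ z = p.2) → ∀ w, (w = q.1 ∨ w = q.2) → ¬R.Adj z w := by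
    intro p hp q hq howpq z hze w hwe hzw
    have hpq : p ≠ q := fun h => howpq (by rw [h])
    obtain ⟨hpU, hp1, hp2, _⟩ := howner p hp
    obtain ⟨hqU, hq1, hq2, _⟩ := howner q hq
    rcases hze with rfl | rfl <;> rcases hwe with rfl | rfl
    · exact aug2 hF hM (by omega) hp hq hpq hpU hqU howpq
        (Or.inl ⟨rfl, rfl⟩) (Or.inl ⟨rfl, rfl⟩) hp2 hzw hq2
    · exact aug2 hF hM (by omega) hp hq hpq hpU hqU howpq
        (Or.inl ⟨rfl, rfl⟩) (Or.inr ⟨rfl, rfl⟩) hp2 hzw hq1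
    · exact aug2 hF hM (by omega) hp hq hpq hpU hqU howpq
        (Or.inr ⟨rfl, rfl⟩) (Or.inl ⟨rfl, rfl⟩) hp1 hzw hq2
    · exact aug2 hF hM (by omega) hp hq hpq hpU hqU howpq
        (Or.inr ⟨rfl, rfl⟩) (Or.inr ⟨rfl, rfl⟩) hp1 hzw hq1
  have hothers : ∀ u ∈ U, ∃ v1, v1 ∈ U ∧ ∃ v2, v2 ∈ U ∧ v1 ≠ v2 ∧ v1 ≠ u ∧ v2 ≠ u := by
    intro u huU
    rw [hUab, mem_insert, mem_insert, mem_singleton] at huU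
    rcases huU with rfl | rfl | rfl
    · exact ⟨b, hbU, c, hcU, hbc, hab.symm, hac.symm⟩
    · exact ⟨a, haU, c, hcU, hac, hab, hbc.symm⟩
    · exact ⟨a, haU, b, hbU, hab, hac, hbc⟩
  -- same-class endpoints are adjacent
  have hclassclique : ∀ p ∈ M, ∀ q ∈ M, ow p = ow q →
      ∀ z, (z = p.1 ∨ z = p.2) → ∀ w, (w = q.1 ∨ w = q.2) → z ≠ w → R.Adj z w := by
    intro p hp q hq hopq z hze w hwe hzw
    by_cases hpq : p = q
    · subst hpq
      rcases hze with rfl | rfl <;> rcases hwe with rfl | rfl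
      · exact absurd rfl hzw
      · exact (hM.1 p hp).2.2
      · exact ((hM.1 p hp).2.2).symm
      · exact absurd rfl hzw
    · by_contra hnadj
      obtain ⟨v1, hv1U, v2, hv2U, hv12, hv1u, hv2u⟩ := hothers (ow p) (howner p hp).1
      have hzv : ∀ v, v ∈ U → z ≠ v := by
        intro v hv h
        exact (mem_sdiff.1 hv).2 (h ▸ endpoint_mem_msup hp hze)
      have hwv : ∀ v, v ∈ U → w ≠ v := by
        intro v hv h
        exact (mem_sdiff.1 hv).2 (h ▸ endpoint_mem_msup hq hwe)
      have hnz1 : ¬R.Adj v1 z := by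
        rcases hze with rfl | rfl
        · exact ((howner p hp).2.2.2 v1 hv1U hv1u).1
        · exact ((howner p hp).2.2.2 v1 hv1U hv1u).2
      have hnz2 : ¬R.Adj v2 z := by
        rcases hze with rfl | rfl
        · exact ((howner p hp).2.2.2 v2 hv2U hv2u).1
        · exact ((howner p hp).2.2.2 v2 hv2U hv2u).2
      have hv1q : v1 ≠ ow q := hopq ▸ hv1u
      have hv2q : v2 ≠ ow q := hopq ▸ hv2u
      have hnw1 : ¬R.Adj v1 w := by
        rcases hwe with rfl | rfl
        · exact ((howner q hq).2.2.2 v1 hv1U hv1q).1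
        · exact ((howner q hq).2.2.2 v1 hv1U hv1q).2
      have hnw2 : ¬R.Adj v2 w := by
        rcases hwe with rfl | rfl
        · exact ((howner q hq).2.2.2 v2 hv2U hv2q).1
        · exact ((howner q hq).2.2.2 v2 hv2U hv2q).2
      exact no_indep4 hK hzw (hzv v1 hv1U) (hzv v2 hv2U) (hwv v1 hv1U) (hwv v2 hv2U) hv12
        hnadj (fun h => hnz1 h.symm) (fun h => hnz2 h.symm)
        (fun h => hnw1 h.symm) (fun h => hnw2 h.symm)
        (hUind v1 hv1U v2 hv2U hv12)
  -- class size bound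
  have hclassbound : ∀ u ∈ U, (M.filter (fun p => ow p = u)).card + 2 ≤ n := by
    intro u huU
    set Mu := M.filter (fun p => ow p = u) with hMu
    have hMuM : Mu ⊆ M := filter_subset _ _
    have hMumatch : IsMatch R x Mu := hM.subset hMuM
    have hmemMu : ∀ z, z ∈ msup Mu → ∃ p, p ∈ M ∧ ow p = u ∧ (z = p.1 ∨ z = p.2) := by
      intro z hz
      rw [mem_msup] at hz
      obtain ⟨p, hp, hze⟩ := hz
      rw [hMu, mem_filter] at hp
      exact ⟨p, hp.1, hp.2, hze⟩
    have hadjxz : ∀ z, z ∈ msup Mu → R.Adj x z := fun z hz =>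
      (R.mem_neighborFinset x _).1 (hsub (msup_mono hMuM hz))
    have hadjuz : ∀ z, z ∈ msup Mu → R.Adj u z := by
      intro z hz
      obtain ⟨p, hp, hop, hze⟩ := hmemMu z hz
      rcases hze with rfl | rfl
      · exact hop ▸ (howner p hp).2.1
      · exact hop ▸ (howner p hp).2.2.1
    have hxadju : R.Adj x u := (R.mem_neighborFinset x u).1 (mem_sdiff.1 huU).1
    have hclique : ∀ α ∈ insert x (insert u (msup Mu)), ∀ β ∈ insert x (insert u (msup Mu)),
        α ≠ β → R.Adj α β := by
      intro α hα β hβ hne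
      rw [mem_insert, mem_insert] at hα hβ
      rcases hα with rfl | rfl | hα <;> rcases hβ with rfl | rfl | hβ
      · exact absurd rfl hne
      · exact hxadju
      · exact hadjxz _ hβ
      · exact hxadju.symm
      · exact absurd rfl hne
      · exact hadjuz _ hβ
      · exact (hadjxz _ hα).symm
      · exact (hadjuz _ hα).symm
      · obtain ⟨p, hp, hop, hze⟩ := hmemMu _ hα
        obtain ⟨q, hq, hoq, hwe⟩ := hmemMu _ hβ
        exact hclassclique p hp q hq (by rw [hop, hoq]) _ hze _ hwe hne
    have hcard := clique_card_lt hcl (fun α hα β hβ hne => hclique α hα β hβ hne)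
    have hunotin : u ∉ msup Mu := fun h => (mem_sdiff.1 huU).2 (msup_mono hMuM h)
    have hxnotin : x ∉ insert u (msup Mu) := by
      rw [mem_insert]
      rintro (rfl | h)
      · exact R.irrefl hxadju
      · exact R.notMem_neighborFinset_self x (hsub (msup_mono hMuM h))
    rw [card_insert_of_notMem hxnotin, card_insert_of_notMem hunotin,
      hMumatch.card_msup] at hcard
    omega
  -- counting: U × U
  have hA1 : 6 ≤ (NEP R U U).card := by
    have hcfp := card_filter_prod U U (fun u z => u ≠ z ∧ ¬R.Adj u z)
    rw [NEP, hcfp]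
    have hfib : ∀ u ∈ U, 2 ≤ (U.filter (fun z => u ≠ z ∧ ¬R.Adj u z)).card := by
      intro u hu
      have hss : U.erase u ⊆ U.filter (fun z => u ≠ z ∧ ¬R.Adj u z) := by
        intro z hz
        have hzU := mem_of_mem_erase hz
        have hzu : u ≠ z := (ne_of_mem_erase hz).symm
        exact mem_filter.2 ⟨hzU, hzu, hUind u hu z hzU hzu⟩
      have := card_le_card hss
      rw [card_erase_of_mem hu, hU3'] at this
      omega
    calc 6 = ∑ _u ∈ U, 2 := by rw [sum_const, smul_eq_mul, hU3']
      _ ≤ _ := sum_le_sum hfib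
  -- counting: U × supp, four per edge
  have hedge4 : ∀ p ∈ M, 4 ≤ (NEP R U ({p.1, p.2} : Finset (Fin (6 * n)))).card := by
    intro p hp
    obtain ⟨v1, hv1U, v2, hv2U, hv12, hv1u, hv2u⟩ := hothers (ow p) (howner p hp).1
    have hmemNE : ∀ v z, v ∈ U → v ≠ ow p → (z = p.1 ∨ z = p.2) →
        (v, z) ∈ NEP R U ({p.1, p.2} : Finset (Fin (6 * n))) := by
      intro v z hv hvu hz
      have hnadj : ¬R.Adj v z := by
        rcases hz with rfl | rfl
        · exact ((howner p hp).2.2.2 v hv hvu).1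
        · exact ((howner p hp).2.2.2 v hv hvu).2
      refine mem_NEP.2 ⟨hv, by rcases hz with rfl | rfl <;> simp, ?_, hnadj⟩
      intro h
      exact (mem_sdiff.1 hv).2 (h ▸ endpoint_mem_msup hp hz)
    have h12 := hM.fst_ne_snd hp
    have hsub4 : ({((v1, p.1) : Fin (6 * n) × Fin (6 * n)), (v1, p.2), (v2, p.1), (v2, p.2)} :
        Finset (Fin (6 * n) × Fin (6 * n))) ⊆ NEP R U ({p.1, p.2} : Finset (Fin (6 * n))) := by
      intro r hr
      rw [mem_insert, mem_insert, mem_insert, mem_singleton] at hr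
      rcases hr with rfl | rfl | rfl | rfl
      · exact hmemNE v1 p.1 hv1U hv1u (Or.inl rfl)
      · exact hmemNE v1 p.2 hv1U hv1u (Or.inr rfl)
      · exact hmemNE v2 p.1 hv2U hv2u (Or.inl rfl)
      · exact hmemNE v2 p.2 hv2U hv2u (Or.inr rfl)
    have hc4 : ({((v1, p.1) : Fin (6 * n) × Fin (6 * n)), (v1, p.2), (v2, p.1), (v2, p.2)} :
        Finset (Fin (6 * n) × Fin (6 * n))).card = 4 := by
      refine card_four ?_ ?_ ?_ ?_ ?_ ?_ <;> intro h <;> rw [Prod.mk.injEq] at h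
      · exact h12 h.2
      · exact hv12 h.1
      · exact hv12 h.1
      · exact hv12 h.1
      · exact hv12 h.1
      · exact h12 h.2
    calc 4 = _ := hc4.symm
      _ ≤ _ := card_le_card hsub4
  have hA2 : 4 * M.card ≤ (NEP R U (msup M)).card := by
    rw [msup_eq_biUnion, NEP_card_biUnion_right (edge_pair_disjoint hM)]
    calc 4 * M.card = ∑ _p ∈ M, 4 := by rw [sum_const, smul_eq_mul, Nat.mul_comm]
      _ ≤ _ := sum_le_sum (fun p hp => hedge4 p hp)
  have hA3 : 4 * M.card ≤ (NEP R (msup M) U).card := by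
    rw [NEP_card_symm]
    exact hA2
  -- counting: supp × supp across classes
  have hinner : ∀ p ∈ M, ∀ q ∈ M, ow p ≠ ow q →
      4 ≤ (NEP R ({p.1, p.2} : Finset (Fin (6 * n))) ({q.1, q.2} : Finset (Fin (6 * n)))).card := by
    intro p hp q hq hne
    have hpq : p ≠ q := fun h => hne (by rw [h])
    have hmm : ∀ z w, (z = p.1 ∨ z = p.2) → (w = q.1 ∨ w = q.2) →
        ((z, w) : Fin (6 * n) × Fin (6 * n)) ∈
          NEP R ({p.1, p.2} : Finset (Fin (6 * n))) ({q.1, q.2} : Finset (Fin (6 * n))) := by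
      intro z w hze hwe
      exact mem_NEP.2 ⟨by rcases hze with rfl | rfl <;> simp,
        by rcases hwe with rfl | rfl <;> simp,
        endpoint_ne hM hp hq hpq hze hwe, hcross p hp q hq hne z hze w hwe⟩
    have hp12 := hM.fst_ne_snd hp
    have hq12 := hM.fst_ne_snd hq
    have hsub4 : ({((p.1, q.1) : Fin (6 * n) × Fin (6 * n)), (p.1, q.2), (p.2, q.1), (p.2, q.2)} :
        Finset (Fin (6 * n) × Fin (6 * n))) ⊆
        NEP R ({p.1, p.2} : Finset (Fin (6 * n))) ({q.1, q.2} : Finset (Fin (6 * n))) := by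
      intro r hr
      rw [mem_insert, mem_insert, mem_insert, mem_singleton] at hr
      rcases hr with rfl | rfl | rfl | rfl
      · exact hmm _ _ (Or.inl rfl) (Or.inl rfl)
      · exact hmm _ _ (Or.inl rfl) (Or.inr rfl)
      · exact hmm _ _ (Or.inr rfl) (Or.inl rfl)
      · exact hmm _ _ (Or.inr rfl) (Or.inr rfl)
    have hc4 : ({((p.1, q.1) : Fin (6 * n) × Fin (6 * n)), (p.1, q.2), (p.2, q.1), (p.2, q.2)} :
        Finset (Fin (6 * n) × Fin (6 * n))).card = 4 := by
      refine card_four ?_ ?_ ?_ ?_ ?_ ?_ <;> intro h <;> rw [Prod.mk.injEq] at h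
      · exact hq12 h.2
      · exact hp12 h.1
      · exact hp12 h.1
      · exact hp12 h.1
      · exact hp12 h.1
      · exact hq12 h.2
    calc 4 = _ := hc4.symm
      _ ≤ _ := card_le_card hsub4
  have hA4piece : ∀ p ∈ M,
      (M.filter (fun q => ow q ≠ ow p)).card * 4 ≤
        (NEP R ({p.1, p.2} : Finset (Fin (6 * n))) (msup M)).card := by
    intro p hp
    rw [msup_eq_biUnion, NEP_card_biUnion_right (edge_pair_disjoint hM)]
    calc (M.filter (fun q => ow q ≠ ow p)).card * 4
        = ∑ _q ∈ M.filter (fun q => ow q ≠ ow p), 4 := by rw [sum_const, smul_eq_mul]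
      _ ≤ ∑ q ∈ M.filter (fun q => ow q ≠ ow p),
            (NEP R ({p.1, p.2} : Finset (Fin (6 * n))) ({q.1, q.2} : Finset (Fin (6 * n)))).card := by
          refine sum_le_sum ?_
          intro q hq
          rw [mem_filter] at hq
          exact hinner p hp q hq.1 (fun h => hq.2 h.symm)
      _ ≤ _ := sum_le_sum_of_subset (filter_subset _ _)
  have hA4 : (∑ p ∈ M, (M.filter (fun q => ow q ≠ ow p)).card) * 4 ≤
      (NEP R (msup M) (msup M)).card := by
    nth_rewrite 2 [msup_eq_biUnion]
    rw [NEP_card_biUnion_right (edge_pair_disjoint hM)]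
    calc (∑ p ∈ M, (M.filter (fun q => ow q ≠ ow p)).card) * 4
        = ∑ p ∈ M, (M.filter (fun q => ow q ≠ ow p)).card * 4 := by rw [sum_mul]
      _ ≤ ∑ p ∈ M, (NEP R (msup M) ({p.1, p.2} : Finset (Fin (6 * n)))).card := by
          refine sum_le_sum ?_
          intro p hp
          rw [NEP_card_symm]
          exact hA4piece p hp
  -- evaluate the double sum
  have d1' : Disjoint Mb Mc := by
    rw [Finset.disjoint_left]
    intro p h1 h2
    rw [hMb, mem_filter] at h1
    rw [hMcdef, mem_filter] at h2
    exact hbc (h1.2.symm.trans h2.2)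
  have d2' : Disjoint Ma Mc := by
    rw [Finset.disjoint_left]
    intro p h1 h2
    rw [hMa, mem_filter] at h1
    rw [hMcdef, mem_filter] at h2
    exact hac (h1.2.symm.trans h2.2)
  have hsuma : ∀ p ∈ Ma, (M.filter (fun q => ow q ≠ ow p)).card = Mb.card + Mc.card := by
    intro p hp
    rw [hMa, mem_filter] at hp
    have heq : M.filter (fun q => ow q ≠ ow p) = Mb ∪ Mc := by
      ext q
      simp only [mem_filter, mem_union, hMb, hMcdef]
      constructor
      · rintro ⟨hq, hne⟩
        rcases hMab q hq with h | h | h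
        · exact absurd (h.trans hp.2.symm) hne
        · exact Or.inl ⟨hq, h⟩
        · exact Or.inr ⟨hq, h⟩
      · rintro (⟨hq, h⟩ | ⟨hq, h⟩)
        · exact ⟨hq, by rw [h, hp.2]; exact fun hh => hab hh.symm⟩
        · exact ⟨hq, by rw [h, hp.2]; exact fun hh => hac hh.symm⟩
    rw [heq, card_union_of_disjoint d1']
  have hsumb : ∀ p ∈ Mb, (M.filter (fun q => ow q ≠ ow p)).card = Ma.card + Mc.card := by
    intro p hp
    rw [hMb, mem_filter] at hp
    have heq : M.filter (fun q => ow q ≠ ow p) = Ma ∪ Mc := by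
      ext q
      simp only [mem_filter, mem_union, hMa, hMcdef]
      constructor
      · rintro ⟨hq, hne⟩
        rcases hMab q hq with h | h | h
        · exact Or.inl ⟨hq, h⟩
        · exact absurd (h.trans hp.2.symm) hne
        · exact Or.inr ⟨hq, h⟩
      · rintro (⟨hq, h⟩ | ⟨hq, h⟩)
        · exact ⟨hq, by rw [h, hp.2]; exact hab⟩
        · exact ⟨hq, by rw [h, hp.2]; exact fun hh => hbc hh.symm⟩
    rw [heq, card_union_of_disjoint d2']
  have hsumc : ∀ p ∈ Mc, (M.filter (fun q => ow q ≠ ow p)).card = Ma.card + Mb.card := by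
    intro p hp
    rw [hMcdef, mem_filter] at hp
    have heq : M.filter (fun q => ow q ≠ ow p) = Ma ∪ Mb := by
      ext q
      simp only [mem_filter, mem_union, hMa, hMb]
      constructor
      · rintro ⟨hq, hne⟩
        rcases hMab q hq with h | h | h
        · exact Or.inl ⟨hq, h⟩
        · exact Or.inr ⟨hq, h⟩
        · exact absurd (h.trans hp.2.symm) hne
      · rintro (⟨hq, h⟩ | ⟨hq, h⟩)
        · exact ⟨hq, by rw [h, hp.2]; exact hac⟩
        · exact ⟨hq, by rw [h, hp.2]; exact hbc⟩
    rw [heq, card_union_of_disjoint d1]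
  have hsumsplit : ∑ p ∈ M, (M.filter (fun q => ow q ≠ ow p)).card =
      Ma.card * (Mb.card + Mc.card) + Mb.card * (Ma.card + Mc.card) +
        Mc.card * (Ma.card + Mb.card) := by
    calc ∑ p ∈ M, (M.filter (fun q => ow q ≠ ow p)).card
        = ∑ p ∈ Ma ∪ Mb ∪ Mc, (M.filter (fun q => ow q ≠ ow p)).card := by rw [hun]
      _ = ∑ p ∈ Ma ∪ Mb, (M.filter (fun q => ow q ≠ ow p)).card +
            ∑ p ∈ Mc, (M.filter (fun q => ow q ≠ ow p)).card := sum_union d2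
      _ = ∑ p ∈ Ma, (M.filter (fun q => ow q ≠ ow p)).card +
            ∑ p ∈ Mb, (M.filter (fun q => ow q ≠ ow p)).card +
            ∑ p ∈ Mc, (M.filter (fun q => ow q ≠ ow p)).card := by rw [sum_union d1]
      _ = Ma.card * (Mb.card + Mc.card) + Mb.card * (Ma.card + Mc.card) +
            Mc.card * (Ma.card + Mb.card) := by
          rw [sum_congr rfl hsuma, sum_congr rfl hsumb, sum_congr rfl hsumc,
            sum_const, sum_const, sum_const, smul_eq_mul, smul_eq_mul, smul_eq_mul]
  have key : M.card ≤ Ma.card * Mb.card + Ma.card * Mc.card + Mb.card * Mc.card + 1 := by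
    refine tri_prod_ineq hpart ?_ ?_ ?_
    · have h := hclassbound a haU
      rw [← hMa] at h
      omega
    · have h := hclassbound b hbU
      rw [← hMb] at h
      omega
    · have h := hclassbound c hcU
      rw [← hMcdef] at h
      omega
  have hexp : (Ma.card * (Mb.card + Mc.card) + Mb.card * (Ma.card + Mc.card) +
      Mc.card * (Ma.card + Mb.card)) * 4 =
      (Ma.card * Mb.card + Ma.card * Mc.card + Mb.card * Mc.card) * 8 := by ring
  obtain ⟨S, hS⟩ : ∃ S, Ma.card * Mb.card + Ma.card * Mc.card + Mb.card * Mc.card = S :=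
    ⟨_, rfl⟩
  rw [hS] at key
  rw [hsumsplit, hexp, hS] at hA4
  omega

lemma no_small_world (hn : 4 ≤ n) (hF : ¬ ContainsFan R n) (hK : ¬ ContainsK4 Rᶜ)
    (hcl : ¬ ∃ s, R.IsNClique (2 * n) s) : False := by
  classical
  set Hs : Fin (6 * n) → Finset (Fin (6 * n)) :=
    fun x => univ.filter (fun v => v ≠ x ∧ ¬R.Adj x v) with hHs
  set NP : Finset (Fin (6 * n) × Fin (6 * n)) := NEP R univ univ with hNP
  set T : Finset (Fin (6 * n) × Fin (6 * n) × Fin (6 * n)) :=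
    univ.filter (fun t => t.2.1 ≠ t.2.2 ∧ ¬R.Adj t.2.1 t.2.2 ∧
      R.Adj t.1 t.2.1 ∧ R.Adj t.1 t.2.2) with hT
  -- fibers of NP over each coordinate
  have hfib1 : ∀ x, (NP.filter (fun p => p.1 = x)).card = (Hs x).card := by
    intro x
    refine card_bij' (fun p _ => p.2) (fun v _ => (x, v)) ?_ ?_ ?_ ?_
    · rintro ⟨u, v⟩ hp
      rw [mem_filter] at hp
      obtain ⟨hNPm, hfst⟩ := hp
      rw [hNP, mem_NEP] at hNPm
      dsimp only at hfst
      subst hfst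
      exact mem_filter.2 ⟨mem_univ _, hNPm.2.2.1.symm, hNPm.2.2.2⟩
    · intro v hv
      rw [hHs] at hv
      rw [mem_filter] at hv
      exact mem_filter.2 ⟨mem_NEP.2 ⟨mem_univ _, mem_univ _, (hv.2.1).symm, hv.2.2⟩, rfl⟩
    · rintro ⟨u, v⟩ hp
      rw [mem_filter] at hp
      have h : u = x := hp.2
      subst h
      rfl
    · intro v _
      rfl
  have hfib2 : ∀ x, (NP.filter (fun p => p.2 = x)).card = (Hs x).card := by
    intro x
    refine card_bij' (fun p _ => p.1) (fun v _ => (v, x)) ?_ ?_ ?_ ?_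
    · rintro ⟨u, v⟩ hp
      rw [mem_filter] at hp
      obtain ⟨hNPm, hsnd⟩ := hp
      rw [hNP, mem_NEP] at hNPm
      dsimp only at hsnd
      subst hsnd
      exact mem_filter.2 ⟨mem_univ _, hNPm.2.2.1, fun h => hNPm.2.2.2 h.symm⟩
    · intro v hv
      rw [hHs] at hv
      rw [mem_filter] at hv
      exact mem_filter.2 ⟨mem_NEP.2 ⟨mem_univ _, mem_univ _, hv.2.1,
        fun h => hv.2.2 h.symm⟩, rfl⟩
    · rintro ⟨u, v⟩ hp
      rw [mem_filter] at hp
      have h : v = x := hp.2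
      subst h
      rfl
    · intro v _
      rfl
  have hmapsfst : ∀ p ∈ NP, p.1 ∈ (univ : Finset (Fin (6 * n))) := fun p _ => mem_univ _
  have hmapssnd : ∀ p ∈ NP, p.2 ∈ (univ : Finset (Fin (6 * n))) := fun p _ => mem_univ _
  have hNPcard : NP.card = ∑ x : Fin (6 * n), (Hs x).card := by
    rw [card_eq_sum_card_fiberwise hmapsfst]
    exact sum_congr rfl fun x _ => hfib1 x
  have hNP1 : ∑ p ∈ NP, R.degree p.1 = ∑ x : Fin (6 * n), R.degree x * (Hs x).card := by
    rw [← sum_fiberwise_of_maps_to hmapsfst (fun p => R.degree p.1)]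
    refine sum_congr rfl fun x _ => ?_
    calc ∑ p ∈ NP.filter (fun p => p.1 = x), R.degree p.1
        = ∑ p ∈ NP.filter (fun p => p.1 = x), R.degree x := by
          refine sum_congr rfl ?_
          intro p hp
          rw [mem_filter] at hp
          rw [hp.2]
      _ = (NP.filter (fun p => p.1 = x)).card * R.degree x := by
          rw [sum_const, smul_eq_mul]
      _ = R.degree x * (Hs x).card := by rw [hfib1 x, Nat.mul_comm]
  have hNP2 : ∑ p ∈ NP, R.degree p.2 = ∑ x : Fin (6 * n), R.degree x * (Hs x).card := by
    rw [← sum_fiberwise_of_maps_to hmapssnd (fun p => R.degree p.2)]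
    refine sum_congr rfl fun x _ => ?_
    calc ∑ p ∈ NP.filter (fun p => p.2 = x), R.degree p.2
        = ∑ p ∈ NP.filter (fun p => p.2 = x), R.degree x := by
          refine sum_congr rfl ?_
          intro p hp
          rw [mem_filter] at hp
          rw [hp.2]
      _ = (NP.filter (fun p => p.2 = x)).card * R.degree x := by
          rw [sum_const, smul_eq_mul]
      _ = R.degree x * (Hs x).card := by rw [hfib2 x, Nat.mul_comm]
  -- T grouped by center
  have hmapsT1 : ∀ t ∈ T, t.1 ∈ (univ : Finset (Fin (6 * n))) := fun t _ => mem_univ _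
  have hT1 : T.card = ∑ x : Fin (6 * n),
      (NEP R (R.neighborFinset x) (R.neighborFinset x)).card := by
    rw [card_eq_sum_card_fiberwise hmapsT1]
    refine sum_congr rfl fun x _ => ?_
    refine card_bij' (fun t _ => t.2) (fun p _ => (x, p)) ?_ ?_ ?_ ?_
    · rintro ⟨y, u, v⟩ ht
      rw [mem_filter] at ht
      obtain ⟨hTm, hfst⟩ := ht
      rw [hT, mem_filter] at hTm
      obtain ⟨-, hne, hnadj, h1, h2⟩ := hTm
      dsimp only at hfst hne hnadj h1 h2
      subst hfst
      exact mem_NEP.2 ⟨(R.mem_neighborFinset _ _).2 h1, (R.mem_neighborFinset _ _).2 h2,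
        hne, hnadj⟩
    · rintro ⟨u, v⟩ hp
      rw [mem_NEP] at hp
      refine mem_filter.2 ⟨?_, rfl⟩
      rw [hT, mem_filter]
      exact ⟨mem_univ _, hp.2.2.1, hp.2.2.2, (R.mem_neighborFinset _ _).1 hp.1,
        (R.mem_neighborFinset _ _).1 hp.2.1⟩
    · rintro ⟨y, u, v⟩ ht
      rw [mem_filter] at ht
      have h : y = x := ht.2
      subst h
      rfl
    · rintro ⟨u, v⟩ _
      rfl
  -- T grouped by outer pair
  have hmapsT2 : ∀ t ∈ T, t.2 ∈ NP := by
    rintro ⟨y, u, v⟩ ht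
    rw [hT, mem_filter] at ht
    exact mem_NEP.2 ⟨mem_univ _, mem_univ _, ht.2.1, ht.2.2.1⟩
  have hT2 : T.card = ∑ p ∈ NP, (R.neighborFinset p.1 ∩ R.neighborFinset p.2).card := by
    rw [card_eq_sum_card_fiberwise hmapsT2]
    refine sum_congr rfl ?_
    rintro ⟨u, v⟩ hp
    refine card_bij' (fun t _ => t.1) (fun y _ => (y, (u, v))) ?_ ?_ ?_ ?_
    · rintro ⟨y, u', v'⟩ ht
      rw [mem_filter] at ht
      obtain ⟨hTm, hsnd⟩ := ht
      rw [hT, mem_filter] at hTm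
      obtain ⟨-, hne, hnadj, h1, h2⟩ := hTm
      dsimp only at hsnd hne hnadj h1 h2
      rw [Prod.mk.injEq] at hsnd
      obtain ⟨rfl, rfl⟩ := hsnd
      exact mem_inter.2 ⟨(R.mem_neighborFinset _ _).2 h1.symm,
        (R.mem_neighborFinset _ _).2 h2.symm⟩
    · intro y hy
      rw [mem_inter] at hy
      have hyu := (R.mem_neighborFinset _ _).1 hy.1
      have hyv := (R.mem_neighborFinset _ _).1 hy.2
      rw [hNP, mem_NEP] at hp
      refine mem_filter.2 ⟨?_, rfl⟩
      rw [hT, mem_filter]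
      exact ⟨mem_univ _, hp.2.2.1, hp.2.2.2, hyu.symm, hyv.symm⟩
    · rintro ⟨y, u', v'⟩ ht
      rw [mem_filter] at ht
      have hsnd : (u', v') = (u, v) := ht.2
      rw [Prod.mk.injEq] at hsnd
      obtain ⟨rfl, rfl⟩ := hsnd
      rfl
    · intro y _
      rfl
  -- the pairwise bound summed over all non-adjacent ordered pairs
  have hstar : ∀ p ∈ NP, (R.neighborFinset p.1 ∩ R.neighborFinset p.2).card + 4 * n ≤
      R.degree p.1 + R.degree p.2 + 1 := by
    rintro ⟨u, v⟩ hp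
    rw [hNP, mem_NEP] at hp
    exact star_bound hK hcl hp.2.2.1 hp.2.2.2
  have hs1 : T.card + 4 * n * NP.card ≤ ∑ p ∈ NP, (R.degree p.1 + R.degree p.2 + 1) := by
    have e1 : ∑ p ∈ NP, ((R.neighborFinset p.1 ∩ R.neighborFinset p.2).card + 4 * n)
        = (∑ p ∈ NP, (R.neighborFinset p.1 ∩ R.neighborFinset p.2).card) +
          NP.card * (4 * n) := by
      rw [sum_add_distrib, sum_const, smul_eq_mul]
    have e2 := sum_le_sum hstar
    rw [e1] at e2
    rw [hT2]
    calc (∑ p ∈ NP, (R.neighborFinset p.1 ∩ R.neighborFinset p.2).card) + 4 * n * NP.card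
        = (∑ p ∈ NP, (R.neighborFinset p.1 ∩ R.neighborFinset p.2).card) +
          NP.card * (4 * n) := by ring
      _ ≤ _ := e2
  have hs2 : ∑ p ∈ NP, (R.degree p.1 + R.degree p.2 + 1) =
      2 * (∑ x : Fin (6 * n), R.degree x * (Hs x).card) + NP.card := by
    rw [sum_add_distrib, sum_add_distrib, hNP1, hNP2, sum_const, smul_eq_mul, Nat.mul_one]
    ring
  -- the per-vertex strict inequality
  have hdegle : ∀ x : Fin (6 * n), R.degree x ≤ 2 * n + 1 := by
    intro x
    obtain ⟨M, hM, hMlt, _, hdeg, hU3, _⟩ := max_match_setup hF hK x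
    omega
  have hcompl : ∀ x : Fin (6 * n), 6 * n = 1 + R.degree x + (Hs x).card := fun x =>
    compl_card x
  have hpoint : ∀ x : Fin (6 * n),
      2 * R.degree x * (Hs x).card + (Hs x).card <
      (NEP R (R.neighborFinset x) (R.neighborFinset x)).card + 4 * n * (Hs x).card := by
    intro x
    have hpart := hcompl x
    have hdle := hdegle x
    rcases (show R.degree x + 1 ≤ 2 * n ∨ R.degree x = 2 * n ∨ R.degree x = 2 * n + 1 by
      omega) with h | h | h
    · have hhpos : 1 ≤ (Hs x).card := by omega
      have hlt : 2 * R.degree x + 1 < 4 * n := by omega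
      calc 2 * R.degree x * (Hs x).card + (Hs x).card
          = (2 * R.degree x + 1) * (Hs x).card := by ring
        _ < 4 * n * (Hs x).card := by
            exact Nat.mul_lt_mul_of_lt_of_le hlt (le_refl _) (by omega)
        _ ≤ _ := Nat.le_add_left _ _
    · have hNE := NE_b hn hF hK hcl h
      have hgoal : 2 * R.degree x * (Hs x).card + (Hs x).card =
          4 * n * (Hs x).card + (Hs x).card := by rw [h]; ring
      rw [hgoal]
      obtain ⟨P, hP⟩ : ∃ P, 4 * n * (Hs x).card = P := ⟨_, rfl⟩
      rw [hP]
      omega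
    · have hNE := NE_c hn hF hK hcl h
      have hgoal : 2 * R.degree x * (Hs x).card + (Hs x).card =
          4 * n * (Hs x).card + 3 * (Hs x).card := by rw [h]; ring
      rw [hgoal]
      obtain ⟨P, hP⟩ : ∃ P, 4 * n * (Hs x).card = P := ⟨_, rfl⟩
      rw [hP]
      omega
  have hne6 : (univ : Finset (Fin (6 * n))).Nonempty := ⟨⟨0, by omega⟩, mem_univ _⟩
  have hsum_lt : ∑ x : Fin (6 * n), (2 * R.degree x * (Hs x).card + (Hs x).card) <
      ∑ x : Fin (6 * n),
        ((NEP R (R.neighborFinset x) (R.neighborFinset x)).card + 4 * n * (Hs x).card) :=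
    sum_lt_sum_of_nonempty hne6 (fun x _ => hpoint x)
  have hchain : ∑ x : Fin (6 * n),
      ((NEP R (R.neighborFinset x) (R.neighborFinset x)).card + 4 * n * (Hs x).card) ≤
      ∑ x : Fin (6 * n), (2 * R.degree x * (Hs x).card + (Hs x).card) := by
    calc ∑ x : Fin (6 * n),
        ((NEP R (R.neighborFinset x) (R.neighborFinset x)).card + 4 * n * (Hs x).card)
        = (∑ x : Fin (6 * n), (NEP R (R.neighborFinset x) (R.neighborFinset x)).card) +
            4 * n * (∑ x : Fin (6 * n), (Hs x).card) := by
          rw [sum_add_distrib, mul_sum]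
      _ = T.card + 4 * n * NP.card := by rw [hT1, hNPcard]
      _ ≤ ∑ p ∈ NP, (R.degree p.1 + R.degree p.2 + 1) := hs1
      _ = 2 * (∑ x : Fin (6 * n), R.degree x * (Hs x).card) +
            (∑ x : Fin (6 * n), (Hs x).card) := by rw [hs2, hNPcard]
      _ = ∑ x : Fin (6 * n), (2 * (R.degree x * (Hs x).card) + (Hs x).card) := by
          rw [sum_add_distrib, ← mul_sum]
      _ = ∑ x : Fin (6 * n), (2 * R.degree x * (Hs x).card + (Hs x).card) :=
          sum_congr rfl fun x _ => by ring
  exact absurd hchain (not_le.2 hsum_lt)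

lemma clique_le_two_n (hn : 4 ≤ n) (hF : ¬ ContainsFan R n) :
    ∀ (k : ℕ) (s : Finset (Fin (6 * n))), R.IsNClique k s → k ≤ 2 * n := by
  intro k s hs
  by_contra hgt
  push_neg at hgt
  obtain ⟨t, hts, htc⟩ := exists_subset_card_eq
    (show 2 * n + 1 ≤ s.card by rw [hs.2]; omega)
  set g := t.equivFinOfCardEq htc with hg
  let f : Fin (2 * n + 1) → Fin (6 * n) := fun i => (g.symm i : Fin (6 * n))
  have hfmem : ∀ i, f i ∈ t := fun i => (g.symm i).2
  have hfinj : Function.Injective f := fun i j h => g.symm.injective (Subtype.ext h)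
  have hne' : ∀ (i j : Fin (2 * n + 1)), i ≠ j → f i ≠ f j :=
    fun i j hij h => hij (hfinj h)
  have hadj : ∀ i j, i ≠ j → R.Adj (f i) (f j) := by
    intro i j hij
    exact hs.1 (mem_coe.2 (hts (hfmem i))) (mem_coe.2 (hts (hfmem j))) (hne' i j hij)
  let e : Fin n → Fin (6 * n) × Fin (6 * n) := fun i =>
    (f ⟨2 * (i : ℕ), by omega⟩, f ⟨2 * (i : ℕ) + 1, by omega⟩)
  let x : Fin (6 * n) := f ⟨2 * n, by omega⟩
  have heinj : Function.Injective e := by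
    intro i j h
    rw [Prod.mk.injEq] at h
    have := hfinj h.1
    rw [Fin.mk.injEq] at this
    exact Fin.ext (by omega)
  set M : Finset (Fin (6 * n) × Fin (6 * n)) := univ.image e with hMdef
  have hmemM : ∀ p ∈ M, ∃ i : Fin n, e i = p := by
    intro p hp
    rw [hMdef, mem_image] at hp
    obtain ⟨i, _, hi⟩ := hp
    exact ⟨i, hi⟩
  have hM : IsMatch R x M := by
    constructor
    · intro p hp
      obtain ⟨i, rfl⟩ := hmemM p hp
      refine ⟨hadj _ _ ?_, hadj _ _ ?_, hadj _ _ ?_⟩ <;>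
        · intro h
          rw [Fin.mk.injEq] at h
          omega
    · intro p hp q hq hpq
      obtain ⟨i, rfl⟩ := hmemM p hp
      obtain ⟨j, rfl⟩ := hmemM q hq
      have hij : i ≠ j := fun h => hpq (by rw [h])
      have hijv : (i : ℕ) ≠ (j : ℕ) := fun h => hij (Fin.ext h)
      refine ⟨hne' _ _ ?_, hne' _ _ ?_, hne' _ _ ?_, hne' _ _ ?_⟩ <;>
        · intro h
          rw [Fin.mk.injEq] at h
          omega
  have hcardM : M.card = n := by
    rw [hMdef, card_image_of_injective _ heinj, card_univ, Fintype.card_fin]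
  have := match_card_lt hF hM
  omega

end RedCliqueAux

/-- In an `(Fₙ, K₄)`-free coloring of `K_{6n}` (`n ≥ 4`), the clique number of the
red subgraph is exactly `2n`. -/
theorem red_clique_number (n : ℕ) (hn : 4 ≤ n)
    (R : SimpleGraph (Fin (6 * n)))
    (hfree : ¬ ContainsFan R n ∧ ¬ ContainsK4 Rᶜ) :
    R.cliqueNum = 2 * n := by
  obtain ⟨hF, hK⟩ := hfree
  classical
  letI : DecidableRel R.Adj := fun a b => Classical.dec _
  have hub : ∀ (k : ℕ) (s : Finset (Fin (6 * n))), R.IsNClique k s → k ≤ 2 * n :=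
    RedCliqueAux.clique_le_two_n hn hF
  have hlb : ∃ s, R.IsNClique (2 * n) s := by
    by_contra hcl
    exact RedCliqueAux.no_small_world hn hF hK hcl
  obtain ⟨s₀, hs₀⟩ := hlb
  have hbdd : 2 * n ∈ upperBounds {k | ∃ s, R.IsNClique k s} := by
    rintro k ⟨s, hs⟩
    exact hub k s hs
  unfold SimpleGraph.cliqueNum
  refine le_antisymm ?_ ?_
  · refine csSup_le ⟨2 * n, ⟨s₀, hs₀⟩⟩ ?_
    rintro k ⟨s, hs⟩
    exact hub k s hs
  · exact le_csSup ⟨2 * n, hbdd⟩ ⟨s₀, hs₀⟩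
end

section
/- Let n ≥ 4 be an integer, let K_{6n} be given a red/blue edge-coloring that is (F_n, K_4)-free, and let x, y, z be three vertices whose three mutual edges are all blue (a blue triangle). Then the set N^B(x) ∩ N^B(y) of common blue neighbors of x and y has size at least 2n − 5 and all edges inside it are red; moreover, all edges between z and N^B(x) ∩ N^B(y) are red, so that (N^B(x) ∩ N^B(y)) ∪ {z} is a red clique of order at least 2n − 4. -/
open SimpleGraph

/-- If `A` has at least four elements and the blue graph has no `K₄`, then `A`
contains a red edge. -/
lemma exists_red_edge {V : Type*} [DecidableEq V] (R : SimpleGraph V)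
    (hK4 : ¬ ContainsK4 Rᶜ) (A : Finset V) (hA : 4 ≤ A.card) :
    ∃ u ∈ A, ∃ w ∈ A, R.Adj u w := by
  have h0 : 0 < A.card := by omega
  obtain ⟨a, ha⟩ := Finset.card_pos.mp h0
  have h1 : 0 < (A.erase a).card := by rw [Finset.card_erase_of_mem ha]; omega
  obtain ⟨b, hb⟩ := Finset.card_pos.mp h1
  have h2 : 0 < ((A.erase a).erase b).card := by
    rw [Finset.card_erase_of_mem hb, Finset.card_erase_of_mem ha]; omega
  obtain ⟨c, hc⟩ := Finset.card_pos.mp h2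
  have h3 : 0 < (((A.erase a).erase b).erase c).card := by
    rw [Finset.card_erase_of_mem hc, Finset.card_erase_of_mem hb,
      Finset.card_erase_of_mem ha]; omega
  obtain ⟨d, hd⟩ := Finset.card_pos.mp h3
  have hbA : b ∈ A := Finset.mem_of_mem_erase hb
  have hcA : c ∈ A := Finset.mem_of_mem_erase (Finset.mem_of_mem_erase hc)
  have hdA : d ∈ A := Finset.mem_of_mem_erase (Finset.mem_of_mem_erase
    (Finset.mem_of_mem_erase hd))
  have hba : b ≠ a := Finset.ne_of_mem_erase hb
  have hcb : c ≠ b := Finset.ne_of_mem_erase hc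
  have hca : c ≠ a := Finset.ne_of_mem_erase (Finset.mem_of_mem_erase hc)
  have hdc : d ≠ c := Finset.ne_of_mem_erase hd
  have hdb : d ≠ b := Finset.ne_of_mem_erase (Finset.mem_of_mem_erase hd)
  have hda : d ≠ a := Finset.ne_of_mem_erase (Finset.mem_of_mem_erase
    (Finset.mem_of_mem_erase hd))
  by_contra h
  push_neg at h
  exact hK4 ⟨a, b, c, d, ⟨hba.symm, h a ha b hbA⟩, ⟨hca.symm, h a ha c hcA⟩,
    ⟨hda.symm, h a ha d hdA⟩, ⟨hcb.symm, h b hbA c hcA⟩, ⟨hdb.symm, h b hbA d hdA⟩,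
    ⟨hdc.symm, h c hcA d hdA⟩⟩

/-- If the blue graph has no `K₄`, any set of at least `2k + 2` vertices contains
`k` pairwise disjoint red edges. -/
lemma exists_red_matching {V : Type*} [DecidableEq V] (R : SimpleGraph V)
    (hK4 : ¬ ContainsK4 Rᶜ) :
    ∀ (k : ℕ) (A : Finset V), 2 * k + 2 ≤ A.card →
      ∃ g : Fin k × Bool → V, Function.Injective g ∧
        (∀ p, g p ∈ A) ∧ (∀ i : Fin k, R.Adj (g (i, true)) (g (i, false))) := by
  intro k
  induction k with
  | zero =>
    intro A _
    exact ⟨fun p => p.1.elim0, fun p => p.1.elim0, fun p => p.1.elim0, fun i => i.elim0⟩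
  | succ k ih =>
    intro A hA
    obtain ⟨u, hu, w, hw, huw⟩ := exists_red_edge R hK4 A (by omega)
    have hne : u ≠ w := huw.ne
    obtain ⟨g', hg'inj, hg'mem, hg'adj⟩ := ih ((A.erase u).erase w) (by
      rw [Finset.card_erase_of_mem (Finset.mem_erase.mpr ⟨hne.symm, hw⟩),
        Finset.card_erase_of_mem hu]
      omega)
    have hg'u : ∀ p, g' p ≠ u := fun p hp => by
      have := hg'mem p
      rw [hp] at this
      exact (Finset.mem_erase.mp (Finset.mem_of_mem_erase this)).1 rfl
    have hg'w : ∀ p, g' p ≠ w := fun p hp => by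
      have := hg'mem p
      rw [hp] at this
      exact (Finset.mem_erase.mp this).1 rfl
    refine ⟨fun p => if h : (p.1 : ℕ) < k then g' (⟨p.1, h⟩, p.2)
      else (if p.2 then u else w), ?_, ?_, ?_⟩
    · rintro ⟨i, a⟩ ⟨j, b⟩ hpq
      dsimp only at hpq
      by_cases h1 : (i : ℕ) < k <;> by_cases h2 : (j : ℕ) < k
      · rw [dif_pos h1, dif_pos h2] at hpq
        have h3 := hg'inj hpq
        simp only [Prod.ext_iff, Fin.ext_iff] at h3 ⊢
        exact h3
      · rw [dif_pos h1, dif_neg h2] at hpq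
        exfalso
        cases b
        · exact hg'w _ hpq
        · exact hg'u _ hpq
      · rw [dif_neg h1, dif_pos h2] at hpq
        exfalso
        cases a
        · exact hg'w _ hpq.symm
        · exact hg'u _ hpq.symm
      · rw [dif_neg h1, dif_neg h2] at hpq
        have hik : (i : ℕ) = k := by have := i.isLt; omega
        have hjk : (j : ℕ) = k := by have := j.isLt; omega
        have hab : a = b := by
          cases a <;> cases b
          · rfl
          · exact absurd hpq.symm hne
          · exact absurd hpq hne
          · rfl
        exact Prod.ext (Fin.ext (hik.trans hjk.symm)) hab
    · rintro ⟨i, a⟩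
      dsimp only
      by_cases h : (i : ℕ) < k
      · rw [dif_pos h]
        exact Finset.mem_of_mem_erase (Finset.mem_of_mem_erase (hg'mem _))
      · rw [dif_neg h]
        cases a
        · exact hw
        · exact hu
    · intro i
      dsimp only
      by_cases h : (i : ℕ) < k
      · rw [dif_pos h, dif_pos h]
        exact hg'adj _
      · rw [dif_neg h, dif_neg h]
        exact huw

/-- In an `(Fₙ, K₄)`-free coloring, every red degree is at most `2n + 1`. -/
lemma red_degree_le {n : ℕ} (R : SimpleGraph (Fin (6 * n)))
    [DecidableRel R.Adj]
    (hFan : ¬ ContainsFan R n) (hK4 : ¬ ContainsK4 Rᶜ) (v : Fin (6 * n)) :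
    R.degree v ≤ 2 * n + 1 := by
  by_contra h
  push_neg at h
  obtain ⟨g, hginj, hgmem, hgadj⟩ := exists_red_matching R hK4 n (R.neighborFinset v)
    (by rw [SimpleGraph.card_neighborFinset_eq_degree]; omega)
  have hgv : ∀ p, g p ≠ v := by
    intro p hp
    have := hgmem p
    rw [hp] at this
    exact R.loopless.irrefl v ((R.mem_neighborFinset v v).mp this)
  have hadjv : ∀ p, R.Adj v (g p) := fun p =>
    (R.mem_neighborFinset v (g p)).mp (hgmem p)
  refine hFan ⟨⟨fun o => o.elim v g, ?_⟩, ?_⟩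
  · rintro (_ | p) (_ | q) hpq
    · rfl
    · exact absurd hpq.symm (hgv q)
    · exact absurd hpq (hgv p)
    · exact congrArg some (hginj hpq)
  · rintro a b ⟨hne, (rfl | rfl | ⟨i, s, t, rfl, rfl⟩)⟩
    · cases b with
      | none => exact absurd rfl hne
      | some q => exact hadjv q
    · cases a with
      | none => exact absurd rfl hne
      | some q => exact (hadjv q).symm
    · have hst : s ≠ t := fun hst => hne (by rw [hst])
      cases s <;> cases t
      · exact absurd rfl hst
      · exact (hgadj i).symm
      · exact hgadj i
      · exact absurd rfl hst

/-- In an `(Fₙ, K₄)`-free coloring of `K_{6n}` (`n ≥ 4`), for any blue triangle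
`x, y, z`: the set `N^B(x) ∩ N^B(y)` of common blue neighbors of `x` and `y` has
size at least `2n - 5`, all edges inside it are red, all edges between `z` and it
are red, and hence `(N^B(x) ∩ N^B(y)) ∪ {z}` is a red clique of order at least
`2n - 4`. -/
theorem blue_triangle_red_cliques (n : ℕ) (hn : 4 ≤ n)
    (R : SimpleGraph (Fin (6 * n)))
    (hfree : ¬ ContainsFan R n ∧ ¬ ContainsK4 Rᶜ)
    (x y z : Fin (6 * n))
    (hxy : Rᶜ.Adj x y) (hxz : Rᶜ.Adj x z) (hyz : Rᶜ.Adj y z) :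
    2 * n - 5 ≤ (Rᶜ.neighborSet x ∩ Rᶜ.neighborSet y).ncard ∧
    R.IsClique (Rᶜ.neighborSet x ∩ Rᶜ.neighborSet y) ∧
    (∀ u ∈ Rᶜ.neighborSet x ∩ Rᶜ.neighborSet y, u ≠ z → R.Adj z u) ∧
    R.IsClique (insert z (Rᶜ.neighborSet x ∩ Rᶜ.neighborSet y)) ∧
    2 * n - 4 ≤ (insert z (Rᶜ.neighborSet x ∩ Rᶜ.neighborSet y)).ncard := by
  classical
  obtain ⟨hFan, hK4⟩ := hfree
  -- blue neighborhoods are large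
  have hdeg : ∀ v : Fin (6 * n), 4 * n - 2 ≤ (Rᶜ.neighborSet v).ncard := by
    intro v
    have h1 : R.degree v ≤ 2 * n + 1 := red_degree_le R hFan hK4 v
    have h2 : Rᶜ.degree v = Fintype.card (Fin (6 * n)) - 1 - R.degree v :=
      R.degree_compl v
    rw [Fintype.card_fin] at h2
    have h3 : (Rᶜ.neighborSet v).ncard = Rᶜ.degree v := by
      rw [Set.ncard_eq_toFinset_card', ← SimpleGraph.neighborFinset_def,
        SimpleGraph.card_neighborFinset_eq_degree]
    omega
  have hcard : 2 * n - 4 ≤ (Rᶜ.neighborSet x ∩ Rᶜ.neighborSet y).ncard := by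
    have h1 := Set.ncard_inter_add_ncard_union (Rᶜ.neighborSet x) (Rᶜ.neighborSet y)
      (Set.toFinite _) (Set.toFinite _)
    have h2 : (Rᶜ.neighborSet x ∪ Rᶜ.neighborSet y).ncard ≤ 6 * n := by
      calc (Rᶜ.neighborSet x ∪ Rᶜ.neighborSet y).ncard
          ≤ (Set.univ : Set (Fin (6 * n))).ncard :=
            Set.ncard_le_ncard (Set.subset_univ _) (Set.toFinite _)
        _ = 6 * n := by rw [Set.ncard_univ, Nat.card_eq_fintype_card, Fintype.card_fin]
    have h3 := hdeg x
    have h4 := hdeg y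
    omega
  have hclique : R.IsClique (Rᶜ.neighborSet x ∩ Rᶜ.neighborSet y) := by
    intro u hu w hw hne
    by_contra hred
    exact hK4 ⟨x, y, u, w, hxy, hu.1, hw.1, hu.2, hw.2, ⟨hne, hred⟩⟩
  have hzred : ∀ u ∈ Rᶜ.neighborSet x ∩ Rᶜ.neighborSet y, u ≠ z → R.Adj z u := by
    intro u hu hne
    by_contra hred
    exact hK4 ⟨x, y, z, u, hxy, hxz, hu.1, hyz, hu.2, ⟨hne.symm, hred⟩⟩
  have hzS : z ∈ Rᶜ.neighborSet x ∩ Rᶜ.neighborSet y := ⟨hxz, hyz⟩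
  have hins : insert z (Rᶜ.neighborSet x ∩ Rᶜ.neighborSet y) =
      Rᶜ.neighborSet x ∩ Rᶜ.neighborSet y := Set.insert_eq_self.mpr hzS
  exact ⟨le_trans (by omega) hcard, hclique, hzred, by rw [hins]; exact hclique,
    by rw [hins]; exact hcard⟩
end

section
/- Let n ≥ 2 be an integer. Partition the vertex set of K_{6n} into three sets A_1, A_2, A_3 each of size 2n, and color all edges inside each A_i red and every edge between two different parts blue (so the red subgraph is 3K_{2n} and the blue subgraph is the complete tripartite graph K_{2n,2n,2n}). Then this coloring contains no red subgraph isomorphic to F_n and no blue subgraph isomorphic to K_4. Consequently r(F_n, K_4) ≥ 6n + 1. -/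
open SimpleGraph

/-- The coloring of `K_{6n}` whose red subgraph is `3K_{2n}` (three disjoint red
cliques `A₁, A₂, A₃` of size `2n`) and whose blue subgraph is `K_{2n,2n,2n}`
contains no red `Fₙ` and no blue `K₄`. Consequently `r(Fₙ, K₄) ≥ 6n + 1`. -/
theorem ramsey_lower_bound (n : ℕ) (hn : 2 ≤ n)
    (A1 A2 A3 : Finset (Fin (6 * n)))
    (hc1 : A1.card = 2 * n) (hc2 : A2.card = 2 * n) (hc3 : A3.card = 2 * n)
    (hd12 : Disjoint A1 A2) (hd13 : Disjoint A1 A3) (hd23 : Disjoint A2 A3)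
    (hcover : A1 ∪ A2 ∪ A3 = Finset.univ)
    (R : SimpleGraph (Fin (6 * n)))
    (hR : ∀ u v : Fin (6 * n), R.Adj u v ↔
      u ≠ v ∧ ((u ∈ A1 ∧ v ∈ A1) ∨ (u ∈ A2 ∧ v ∈ A2) ∨ (u ∈ A3 ∧ v ∈ A3))) :
    (¬ ContainsFan R n ∧ ¬ ContainsK4 Rᶜ) ∧
    ∀ r : ℕ, (∀ c : SimpleGraph (Fin r), ContainsFan c n ∨ ContainsK4 cᶜ) →
      6 * n + 1 ≤ r := by
  have hmem : ∀ v : Fin (6 * n), v ∈ A1 ∨ v ∈ A2 ∨ v ∈ A3 := by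
    intro v
    have : v ∈ A1 ∪ A2 ∪ A3 := by rw [hcover]; exact Finset.mem_univ v
    simpa [Finset.mem_union, or_assoc] using this
  have noFan : ¬ ContainsFan R n := by
    rintro ⟨f, hf⟩
    have hadj : ∀ x : Fin n × Bool, R.Adj (f none) (f (some x)) := by
      intro x
      exact hf none (some x) ⟨by simp, Or.inl rfl⟩
    have key : ∀ A : Finset (Fin (6 * n)), A.card = 2 * n → f none ∈ A →
        (∀ x, f (some x) ∈ A) → False := by
      intro A hA hn0 hall
      have hsub : Finset.univ.image f ⊆ A := by
        intro u hu
        simp only [Finset.mem_image] at hu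
        obtain ⟨x, -, rfl⟩ := hu
        cases x with
        | none => exact hn0
        | some y => exact hall y
      have hcard := Finset.card_le_card hsub
      rw [Finset.card_image_of_injective _ f.injective, hA] at hcard
      simp only [Finset.card_univ, Fintype.card_option, Fintype.card_prod,
        Fintype.card_fin, Fintype.card_bool] at hcard
      omega
    obtain hA | hA | hA := hmem (f none)
    · refine key A1 hc1 hA fun x => ?_
      rcases (hR _ _).mp (hadj x) with ⟨-, ⟨-, h⟩ | ⟨h1, -⟩ | ⟨h1, -⟩⟩
      · exact h
      · exact (Finset.disjoint_left.mp hd12 hA h1).elim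
      · exact (Finset.disjoint_left.mp hd13 hA h1).elim
    · refine key A2 hc2 hA fun x => ?_
      rcases (hR _ _).mp (hadj x) with ⟨-, ⟨h1, -⟩ | ⟨-, h⟩ | ⟨h1, -⟩⟩
      · exact (Finset.disjoint_right.mp hd12 hA h1).elim
      · exact h
      · exact (Finset.disjoint_left.mp hd23 hA h1).elim
    · refine key A3 hc3 hA fun x => ?_
      rcases (hR _ _).mp (hadj x) with ⟨-, ⟨h1, -⟩ | ⟨h1, -⟩ | ⟨-, h⟩⟩
      · exact (Finset.disjoint_right.mp hd13 hA h1).elim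
      · exact (Finset.disjoint_right.mp hd23 hA h1).elim
      · exact h
  have noK4 : ¬ ContainsK4 Rᶜ := by
    rintro ⟨a, b, c, d, hab, hac, had, hbc, hbd, hcd⟩
    have hblue : ∀ u v, Rᶜ.Adj u v →
        ¬((u ∈ A1 ∧ v ∈ A1) ∨ (u ∈ A2 ∧ v ∈ A2) ∨ (u ∈ A3 ∧ v ∈ A3)) := by
      intro u v huv h
      rw [SimpleGraph.compl_adj] at huv
      exact huv.2 ((hR u v).mpr ⟨huv.1, h⟩)
    have ha := hmem a; have hb := hmem b; have hc := hmem c; have hd := hmem d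
    have h1 := hblue _ _ hab; have h2 := hblue _ _ hac; have h3 := hblue _ _ had
    have h4 := hblue _ _ hbc; have h5 := hblue _ _ hbd; have h6 := hblue _ _ hcd
    rcases ha with ha | ha | ha <;> rcases hb with hb | hb | hb <;>
      rcases hc with hc | hc | hc <;> rcases hd with hd | hd | hd <;>
      first
        | exact h1 (Or.inl ⟨ha, hb⟩)
        | exact h1 (Or.inr (Or.inl ⟨ha, hb⟩))
        | exact h1 (Or.inr (Or.inr ⟨ha, hb⟩))
        | exact h2 (Or.inl ⟨ha, hc⟩)
        | exact h2 (Or.inr (Or.inl ⟨ha, hc⟩))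
        | exact h2 (Or.inr (Or.inr ⟨ha, hc⟩))
        | exact h3 (Or.inl ⟨ha, hd⟩)
        | exact h3 (Or.inr (Or.inl ⟨ha, hd⟩))
        | exact h3 (Or.inr (Or.inr ⟨ha, hd⟩))
        | exact h4 (Or.inl ⟨hb, hc⟩)
        | exact h4 (Or.inr (Or.inl ⟨hb, hc⟩))
        | exact h4 (Or.inr (Or.inr ⟨hb, hc⟩))
        | exact h5 (Or.inl ⟨hb, hd⟩)
        | exact h5 (Or.inr (Or.inl ⟨hb, hd⟩))
        | exact h5 (Or.inr (Or.inr ⟨hb, hd⟩))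
        | exact h6 (Or.inl ⟨hc, hd⟩)
        | exact h6 (Or.inr (Or.inl ⟨hc, hd⟩))
        | exact h6 (Or.inr (Or.inr ⟨hc, hd⟩))
  refine ⟨⟨noFan, noK4⟩, ?_⟩
  intro r hr
  by_contra hlt
  push_neg at hlt
  have hle : r ≤ 6 * n := by omega
  let e : Fin r ↪ Fin (6 * n) := ⟨Fin.castLE hle, Fin.castLE_injective hle⟩
  obtain hfan | hk4 := hr (R.comap e)
  · obtain ⟨f, hf⟩ := hfan
    exact noFan ⟨f.trans e, fun u v h => hf u v h⟩
  · obtain ⟨a, b, c, d, h1, h2, h3, h4, h5, h6⟩ := hk4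
    have lift : ∀ u v, ((R.comap e)ᶜ).Adj u v → Rᶜ.Adj (e u) (e v) := by
      intro u v h
      rw [SimpleGraph.compl_adj] at h ⊢
      exact ⟨fun he => h.1 (e.injective he), h.2⟩
    exact noK4 ⟨e a, e b, e c, e d, lift _ _ h1, lift _ _ h2, lift _ _ h3,
      lift _ _ h4, lift _ _ h5, lift _ _ h6⟩
end
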